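/- arXiv:1710.02112 — 4 statements merged into one kernel-verified Lean document; each statement's English description precedes it below -/
import Mathlib

section
/- First moment of the sieve weight: there exists an absolute constant C > 0 such that for every 0 < ε < 1/2 the following holds for parameters 1/ε < w < H_1 < H_2 < H_3 < H_4 with w sufficiently large depending on ε and each of H_1, H_2, H_3, H_4 sufficiently large depending on ε and the preceding parameters, with W := ∏_{p ≤ w} p: |E^log_{H_3 < n ≤ H_4, gcd(n,W)=1} g(n) − 1| ≤ C·ε², where g(n) := E^log_{H_1 < p ≤ H_2} p·1_{p ∣ n} (logarithmic average over primes p). -/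
open Finset

noncomputable def logAvg (A : Finset ℕ) (f : ℕ → ℝ) : ℝ :=
  (∑ n ∈ A, f n / n) / (∑ n ∈ A, (1 : ℝ) / n)

noncomputable def primesIoc (Hm Hp : ℕ) : Finset ℕ :=
  (Finset.Ioc Hm Hp).filter Nat.Prime

noncomputable def primorialW (w : ℕ) : ℕ :=
  ∏ p ∈ (Finset.range (w + 1)).filter Nat.Prime, p

noncomputable def sieveWeight (H1 H2 n : ℕ) : ℝ :=
  logAvg (primesIoc H1 H2) fun p => (p : ℝ) * (if p ∣ n then 1 else 0)

lemma sum_Ioc_one_div_le (a : ℕ) (ha : 1 ≤ a) : ∀ b : ℕ, a ≤ b →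
    ∑ n ∈ Finset.Ioc a b, (1:ℝ)/n ≤ Real.log b - Real.log a := by
  intro b hb
  induction b, hb using Nat.le_induction with
  | base => simp
  | succ b hb ih =>
    rw [Finset.sum_Ioc_succ_top (by omega)]
    have hb0 : (0:ℝ) < b := by
      have : 1 ≤ b := le_trans ha hb
      exact_mod_cast Nat.lt_of_lt_of_le Nat.zero_lt_one this
    have key : (1:ℝ)/(b+1) ≤ Real.log (b+1) - Real.log b := by
      have h1 : Real.log ((b:ℝ)/(b+1)) ≤ (b:ℝ)/(b+1) - 1 :=
        Real.log_le_sub_one_of_pos (by positivity)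
      have h2 : Real.log ((b:ℝ)/(b+1)) = Real.log b - Real.log (b+1) :=
        Real.log_div (ne_of_gt hb0) (by positivity)
      have h3 : (b:ℝ)/(b+1) - 1 = -(1/(b+1)) := by field_simp; ring
      rw [h2, h3] at h1; linarith
    push_cast
    linarith

lemma sum_filter_Ioc_le (a b : ℕ) (ha : 1 ≤ a) (hab : a ≤ b) (Q : ℕ → Prop) [DecidablePred Q] :
    ∑ n ∈ (Finset.Ioc a b).filter Q, (1:ℝ)/n ≤ Real.log b - Real.log a := by
  refine le_trans (Finset.sum_le_sum_of_subset_of_nonneg (Finset.filter_subset _ _) ?_) ?_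
  · intro i _ _; positivity
  · exact sum_Ioc_one_div_le a ha b hab

lemma exists_harmonic_Ioc_ge (a : ℕ) (X : ℝ) : ∃ M : ℕ, X ≤ ∑ k ∈ Finset.Ioc a M, (1:ℝ)/k := by
  have h := Real.tendsto_sum_range_one_div_nat_succ_atTop
  have h2 := h.eventually_ge_atTop (X + ∑ i ∈ Finset.range a, (1:ℝ)/(i+1))
  obtain ⟨M, hM⟩ := (h2.and (Filter.eventually_ge_atTop a)).exists
  refine ⟨M, ?_⟩
  have key : ∑ k ∈ Finset.Ioc a M, (1:ℝ)/k
      = ∑ i ∈ Finset.range M, (1:ℝ)/(i+1) - ∑ i ∈ Finset.range a, (1:ℝ)/(i+1) := by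
    have h3 : ∀ m : ℕ, ∑ i ∈ Finset.range m, (1:ℝ)/(i+1) = ∑ k ∈ Finset.Ioc 0 m, (1:ℝ)/k := by
      intro m
      rw [show Finset.Ioc 0 m = Finset.Ico 1 (m+1) by
            rw [← Finset.Icc_add_one_left_eq_Ioc, Finset.Ico_add_one_right_eq_Icc]; rfl,
         Finset.sum_Ico_eq_sum_range]
      push_cast; simp [add_comm]
    rw [h3, h3, ← Finset.sum_Ioc_consecutive _ (Nat.zero_le a) hM.2]
    ring
  rw [key]; linarith [hM.1]

lemma sum_div_scale (p W H3 H4 : ℕ) (hp : 0 < p) (hpW : Nat.Coprime p W) :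
    ∑ n ∈ (Finset.Ioc H3 H4).filter (fun n => Nat.gcd n W = 1 ∧ p ∣ n), (1:ℝ)/n
      = ∑ m ∈ (Finset.Ioc (H3/p) (H4/p)).filter (fun m => Nat.gcd m W = 1), (1:ℝ)/(p*m) := by
  refine Finset.sum_nbij' (fun n => n / p) (fun m => p * m) ?_ ?_ ?_ ?_ ?_
  · intro n hn
    simp only [Finset.mem_filter, Finset.mem_Ioc] at hn ⊢
    obtain ⟨⟨h3, h4⟩, hg, hd⟩ := hn
    refine ⟨⟨Nat.div_lt_div_of_lt_of_dvd hd h3, Nat.div_le_div_right h4⟩, ?_⟩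
    exact Nat.Coprime.coprime_dvd_left (Nat.div_dvd_of_dvd hd) hg
  · intro m hm
    simp only [Finset.mem_filter, Finset.mem_Ioc] at hm ⊢
    obtain ⟨⟨h3, h4⟩, hg⟩ := hm
    have hub : p * m ≤ H4 := le_trans (Nat.mul_le_mul_left p h4) (Nat.mul_div_le H4 p)
    have hlb : H3 < p * m := by
      have h1 := Nat.div_add_mod H3 p
      have h2 := Nat.mod_lt H3 hp
      have h3' : p * (H3 / p) + p ≤ p * m := by
        rw [← Nat.mul_succ]
        exact Nat.mul_le_mul_left p h3
      omega
    exact ⟨⟨hlb, hub⟩, Nat.coprime_mul_iff_left.mpr ⟨hpW, hg⟩, dvd_mul_right p m⟩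
  · intro n hn
    simp only [Finset.mem_filter] at hn
    exact Nat.mul_div_cancel' hn.2.2
  · intro m _
    exact Nat.mul_div_cancel_left m hp
  · intro n hn
    simp only [Finset.mem_filter] at hn
    rw [show ((p:ℝ) * ((n/p : ℕ):ℝ)) = (n:ℝ) by rw [← Nat.cast_mul, Nat.mul_div_cancel' hn.2.2]]

lemma sum_scale_mul (p : ℕ) (hp : 0 < p) (B : Finset ℕ) :
    (p:ℝ) * ∑ m ∈ B, (1:ℝ)/(p*m) = ∑ m ∈ B, (1:ℝ)/m := by
  rw [Finset.mul_sum]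
  refine Finset.sum_congr rfl fun m _ => ?_
  rcases Nat.eq_zero_or_pos m with h' | h'
  · subst h'; simp
  have hp0 : (p:ℝ) ≠ 0 := by positivity
  have hm0 : (m:ℝ) ≠ 0 := by positivity
  field_simp

lemma F_split (W a b c : ℕ) (hab : a ≤ b) (hbc : b ≤ c) :
    ∑ n ∈ (Finset.Ioc a c).filter (fun n => Nat.gcd n W = 1), (1:ℝ)/n
      = ∑ n ∈ (Finset.Ioc a b).filter (fun n => Nat.gcd n W = 1), (1:ℝ)/n
        + ∑ n ∈ (Finset.Ioc b c).filter (fun n => Nat.gcd n W = 1), (1:ℝ)/n := by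
  have hdisj : Disjoint ((Finset.Ioc a b).filter (fun n => Nat.gcd n W = 1))
      ((Finset.Ioc b c).filter (fun n => Nat.gcd n W = 1)) := by
    apply Finset.disjoint_filter_filter
    rw [Finset.disjoint_left]
    intro x hx hx'
    simp only [Finset.mem_Ioc] at hx hx'
    omega
  rw [← Finset.Ioc_union_Ioc_eq_Ioc hab hbc, Finset.filter_union, Finset.sum_union hdisj]

/-- `F a b ≤ log (2p)` when `1 ≤ a ≤ b ≤ 2 p a`. -/
lemma F_le_log (W a b p : ℕ) (ha : 1 ≤ a) (hab : a ≤ b) (hb : b ≤ 2 * p * a) (hp : 1 ≤ p) :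
    ∑ n ∈ (Finset.Ioc a b).filter (fun n => Nat.gcd n W = 1), (1:ℝ)/n
      ≤ Real.log (2 * p) := by
  refine le_trans (sum_filter_Ioc_le a b ha hab _) ?_
  have hb0 : (0:ℝ) < (b:ℝ) := by exact_mod_cast lt_of_lt_of_le ha hab
  have ha0 : (0:ℝ) < (a:ℝ) := by exact_mod_cast ha
  have hp0 : (0:ℝ) < (p:ℝ) := by exact_mod_cast hp
  have h1 : Real.log (b:ℝ) ≤ Real.log (2*(p:ℝ)*(a:ℝ)) := by
    apply Real.log_le_log hb0
    exact_mod_cast hb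
  have h2 : Real.log (2*(p:ℝ)*(a:ℝ)) = Real.log (2*(p:ℝ)) + Real.log (a:ℝ) :=
    Real.log_mul (by positivity) (by positivity)
  push_cast
  linarith

/-- **First moment of the sieve weight.** There is an absolute constant `C > 0` such
that for `0 < ε < 1/2` and parameters `1/ε < w < H₁ < H₂ < H₃ < H₄`, with `w`
sufficiently large depending on `ε` and each of `H₁, H₂, H₃, H₄` sufficiently large
depending on `ε` and the preceding parameters, with `W := ∏_{p ≤ w} p`, one has
`E^log_{H₃ < n ≤ H₄, (n,W)=1} g(n) = 1 + O(ε²)`. -/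
theorem sieve_weight_first_moment :
    ∃ C : ℝ, 0 < C ∧ ∀ ε : ℝ, 0 < ε → ε < 1 / 2 →
      ∃ w0 : ℕ, ∀ w : ℕ, 1 / ε < (w : ℝ) → w0 ≤ w →
        ∃ H10 : ℕ, ∀ H1 : ℕ, w < H1 → H10 ≤ H1 →
          ∃ H20 : ℕ, ∀ H2 : ℕ, H1 < H2 → H20 ≤ H2 →
            ∃ H30 : ℕ, ∀ H3 : ℕ, H2 < H3 → H30 ≤ H3 →
              ∃ H40 : ℕ, ∀ H4 : ℕ, H3 < H4 → H40 ≤ H4 →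
                |logAvg ((Finset.Ioc H3 H4).filter
                      fun n => Nat.gcd n (primorialW w) = 1)
                    (fun n => sieveWeight H1 H2 n) - 1| ≤ C * ε ^ 2 := by
  refine ⟨1, one_pos, fun ε hε hε2 => ?_⟩
  refine ⟨2, fun w hw1 hw2 => ?_⟩
  refine ⟨2, fun H1 hwH1 hH1two => ?_⟩
  refine ⟨2*H1, fun H2 hH12 hH2b => ?_⟩
  refine ⟨2*H2, fun H3 hH23 hH3b => ?_⟩
  set W := primorialW w with hWdef
  have hW1 : 1 ≤ W := by
    rw [hWdef, primorialW]
    apply Finset.one_le_prod'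
    intro q hq
    exact (Finset.mem_filter.mp hq).2.pos
  set K := 2 * Real.log (2*(H2:ℝ)) with hKdef
  have hH2four : 4 ≤ H2 := by omega
  have hlogpos : 0 < Real.log (2*(H2:ℝ)) := by
    apply Real.log_pos
    have : (4:ℝ) ≤ (H2:ℝ) := by exact_mod_cast hH2four
    linarith
  have hK0 : 0 < K := by positivity
  obtain ⟨M, hM⟩ := exists_harmonic_Ioc_ge H3 (2*W*K/ε^2)
  refine ⟨max (H3*H2+1) (M*W+1), fun H4 hH34 hH4b => ?_⟩
  have hH4a : H3*H2+1 ≤ H4 := le_trans (le_max_left _ _) hH4b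
  have hH4M : M*W+1 ≤ H4 := le_trans (le_max_right _ _) hH4b
  -- notation
  set P := primesIoc H1 H2 with hPdef
  set A := (Finset.Ioc H3 H4).filter (fun n => Nat.gcd n W = 1) with hAdef
  set L := ∑ p ∈ P, (1:ℝ)/p with hLdef
  set S := ∑ n ∈ A, (1:ℝ)/n with hSdef
  -- prime facts
  have hPfact : ∀ p ∈ P, Nat.Prime p ∧ H1 < p ∧ p ≤ H2 := by
    intro p hp
    simp only [hPdef, primesIoc, Finset.mem_filter, Finset.mem_Ioc] at hp
    exact ⟨hp.2, hp.1.1, hp.1.2⟩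
  have hPcop : ∀ p ∈ P, Nat.Coprime p W := by
    intro p hp
    obtain ⟨pp, hp1, hp2⟩ := hPfact p hp
    apply Nat.Coprime.prod_right
    intro q hq
    simp only [Finset.mem_filter, Finset.mem_range] at hq
    exact (Nat.coprime_primes pp hq.2).mpr (by omega)
  -- P nonempty, L > 0
  have hPne : P.Nonempty := by
    obtain ⟨p, pp, h1p, hp2⟩ := Nat.exists_prime_lt_and_le_two_mul H1 (by omega)
    refine ⟨p, ?_⟩
    simp only [hPdef, primesIoc, Finset.mem_filter, Finset.mem_Ioc]
    exact ⟨⟨h1p, le_trans hp2 hH2b⟩, pp⟩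
  have hL0 : 0 < L := by
    apply Finset.sum_pos _ hPne
    intro p hp
    have : 0 < p := (hPfact p hp).1.pos
    positivity
  -- S lower bound
  have hSK : K/ε^2 ≤ S := by
    have step1 : ∑ k ∈ Finset.Ioc H3 M, (1:ℝ)/(2*W*k) ≤ ∑ k ∈ Finset.Ioc H3 M, (1:ℝ)/(k*W+1) := by
      refine Finset.sum_le_sum fun k hk => ?_
      have hk1 : 1 ≤ k := by
        have := (Finset.mem_Ioc.mp hk).1; omega
      have hkr : (1:ℝ) ≤ (k:ℝ) := by exact_mod_cast hk1
      have hWr : (1:ℝ) ≤ (W:ℝ) := by exact_mod_cast hW1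
      have h1 : (k:ℝ)*(W:ℝ)+1 ≤ 2*(W:ℝ)*(k:ℝ) := by nlinarith
      exact one_div_le_one_div_of_le (by positivity) h1
    have hinj : ∀ a ∈ Finset.Ioc H3 M, ∀ b ∈ Finset.Ioc H3 M,
        (fun k => k*W+1) a = (fun k => k*W+1) b → a = b := by
      intro a _ b _ hab
      simp only at hab
      have : a * W = b * W := by omega
      exact Nat.eq_of_mul_eq_mul_right (by omega) this
    have himg : ∑ n ∈ (Finset.Ioc H3 M).image (fun k => k*W+1), (1:ℝ)/n
        = ∑ k ∈ Finset.Ioc H3 M, (1:ℝ)/((k*W+1 : ℕ):ℝ) := Finset.sum_image hinj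
    have step2 : ∑ k ∈ Finset.Ioc H3 M, (1:ℝ)/(k*W+1) ≤ S := by
      have hcast : ∑ k ∈ Finset.Ioc H3 M, (1:ℝ)/(k*W+1)
          = ∑ k ∈ Finset.Ioc H3 M, (1:ℝ)/((k*W+1 : ℕ):ℝ) := by
        refine Finset.sum_congr rfl fun k _ => ?_
        push_cast; ring_nf
      rw [hcast, ← himg]
      apply Finset.sum_le_sum_of_subset_of_nonneg
      · intro n hn
        simp only [Finset.mem_image, Finset.mem_Ioc] at hn
        obtain ⟨k, ⟨hk1, hk2⟩, rfl⟩ := hn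
        simp only [hAdef, Finset.mem_filter, Finset.mem_Ioc]
        have hlb : H3 < k * W + 1 := by
          have : k ≤ k * W := Nat.le_mul_of_pos_right k (by omega)
          omega
        have hub : k * W + 1 ≤ H4 := by
          have : k * W ≤ M * W := Nat.mul_le_mul_right W hk2
          omega
        refine ⟨⟨hlb, hub⟩, ?_⟩
        rw [show k * W + 1 = 1 + k * W by ring, Nat.gcd_add_mul_right_left, Nat.gcd_one_left]
      · intro i _ _; positivity
    have step0 : K/ε^2 ≤ ∑ k ∈ Finset.Ioc H3 M, (1:ℝ)/(2*W*k) := by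
      have : ∑ k ∈ Finset.Ioc H3 M, (1:ℝ)/(2*W*k)
          = (1/(2*(W:ℝ))) * ∑ k ∈ Finset.Ioc H3 M, (1:ℝ)/k := by
        rw [Finset.mul_sum]
        refine Finset.sum_congr rfl fun k _ => ?_
        rcases Nat.eq_zero_or_pos k with h|h
        · subst h; simp
        have : (0:ℝ) < k := by exact_mod_cast h
        have hW0 : (0:ℝ) < W := by exact_mod_cast hW1
        field_simp
      rw [this]
      have hW0 : (0:ℝ) < W := by exact_mod_cast hW1
      calc K/ε^2 = (1/(2*(W:ℝ))) * (2*W*K/ε^2) := by field_simp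
        _ ≤ (1/(2*(W:ℝ))) * ∑ k ∈ Finset.Ioc H3 M, (1:ℝ)/k := by
            apply mul_le_mul_of_nonneg_left hM (by positivity)
    linarith
  have hS0 : 0 < S := lt_of_lt_of_le (by positivity) hSK
  -- per-prime analysis
  have hper : ∀ p ∈ P, |(p:ℝ) * (∑ n ∈ A.filter (fun n => p ∣ n), (1:ℝ)/n) - S| ≤ K := by
    intro p hp
    obtain ⟨pp, hp1, hp2⟩ := hPfact p hp
    have hp0 : 0 < p := pp.pos
    have hpW : Nat.Coprime p W := hPcop p hp
    have hAfilter : A.filter (fun n => p ∣ n)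
        = (Finset.Ioc H3 H4).filter (fun n => Nat.gcd n W = 1 ∧ p ∣ n) := by
      rw [hAdef, Finset.filter_filter]
    have hscale : (p:ℝ) * (∑ n ∈ A.filter (fun n => p ∣ n), (1:ℝ)/n)
        = ∑ m ∈ (Finset.Ioc (H3/p) (H4/p)).filter (fun m => Nat.gcd m W = 1), (1:ℝ)/m := by
      rw [hAfilter, sum_div_scale p W H3 H4 hp0 hpW, sum_scale_mul p hp0]
    -- chain
    have hc1 : H3/p ≤ H3 := Nat.div_le_self _ _
    have hc2 : H3 ≤ H4/p := by
      rw [Nat.le_div_iff_mul_le hp0]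
      calc H3 * p ≤ H3 * H2 := Nat.mul_le_mul_left H3 hp2
        _ ≤ H4 := by omega
    have hc3 : H4/p ≤ H4 := Nat.div_le_self _ _
    have hsplit1 := F_split W (H3/p) H3 (H4/p) hc1 hc2
    have hsplit2 := F_split W H3 (H4/p) H4 hc2 hc3
    have h2p : 2*p ≤ H3 := by omega
    have ha1 : 1 ≤ H3/p := (Nat.one_le_div_iff hp0).mpr (by omega)
    have hb1 : 1 ≤ H4/p := le_trans ha1 (Nat.div_le_div_right (by omega))
    have hbound1 : ∑ n ∈ (Finset.Ioc (H3/p) H3).filter (fun n => Nat.gcd n W = 1), (1:ℝ)/n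
        ≤ Real.log (2*p) := by
      apply F_le_log W (H3/p) H3 p ha1 hc1 _ hp0
      have h1 := Nat.div_add_mod H3 p
      have h2 := Nat.mod_lt H3 hp0
      set q := p * (H3/p) with hq
      have : 2 * p * (H3/p) = 2 * q := by rw [hq]; ring
      omega
    have hbound2 : ∑ n ∈ (Finset.Ioc (H4/p) H4).filter (fun n => Nat.gcd n W = 1), (1:ℝ)/n
        ≤ Real.log (2*p) := by
      apply F_le_log W (H4/p) H4 p hb1 hc3 _ hp0
      have h1 := Nat.div_add_mod H4 p
      have h2 := Nat.mod_lt H4 hp0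
      set q := p * (H4/p) with hq
      have : 2 * p * (H4/p) = 2 * q := by rw [hq]; ring
      omega
    have hnn1 : (0:ℝ) ≤ ∑ n ∈ (Finset.Ioc (H3/p) H3).filter (fun n => Nat.gcd n W = 1), (1:ℝ)/n :=
      Finset.sum_nonneg fun i _ => by positivity
    have hnn2 : (0:ℝ) ≤ ∑ n ∈ (Finset.Ioc (H4/p) H4).filter (fun n => Nat.gcd n W = 1), (1:ℝ)/n :=
      Finset.sum_nonneg fun i _ => by positivity
    have hlogle : Real.log (2*(p:ℝ)) ≤ Real.log (2*(H2:ℝ)) := by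
      apply Real.log_le_log (by positivity)
      have : (p:ℝ) ≤ (H2:ℝ) := by exact_mod_cast hp2
      linarith
    rw [hscale, hsplit1]
    rw [show S = (∑ n ∈ (Finset.Ioc H3 (H4/p)).filter (fun n => Nat.gcd n W = 1), (1:ℝ)/n)
        + ∑ n ∈ (Finset.Ioc (H4/p) H4).filter (fun n => Nat.gcd n W = 1), (1:ℝ)/n from hsplit2]
    rw [abs_sub_le_iff]
    constructor <;> [skip; skip] <;>
      · push_cast at hbound1 hbound2 ⊢
        rw [hKdef]
        linarith
  -- rewrite the log average
  have hn0 : ∀ n ∈ A, (n:ℝ) ≠ 0 := by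
    intro n hn
    simp only [hAdef, Finset.mem_filter, Finset.mem_Ioc] at hn
    have : 0 < n := by omega
    positivity
  have hLne : L ≠ 0 := ne_of_gt hL0
  have hterm : ∀ n ∈ A, sieveWeight H1 H2 n / n
      = (1/L) * ∑ p ∈ P, (if p ∣ n then (1:ℝ)/n else 0) := by
    intro n hn
    have hnn := hn0 n hn
    have hsw : sieveWeight H1 H2 n = (∑ p ∈ P, (if p ∣ n then (1:ℝ) else 0)) / L := by
      rw [sieveWeight, logAvg, ← hPdef, ← hLdef]
      congr 1
      refine Finset.sum_congr rfl fun p hp => ?_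
      have hp0 : (p:ℝ) ≠ 0 := by
        have := (hPfact p hp).1.pos
        positivity
      exact mul_div_cancel_left₀ _ hp0
    rw [hsw, div_div, Finset.sum_div]
    rw [Finset.mul_sum]
    refine Finset.sum_congr rfl fun p _ => ?_
    split
    · field_simp
    · simp
  have hsum : ∑ n ∈ A, sieveWeight H1 H2 n / n
      = (1/L) * ∑ p ∈ P, ∑ n ∈ A.filter (fun n => p ∣ n), (1:ℝ)/n := by
    calc ∑ n ∈ A, sieveWeight H1 H2 n / n
        = ∑ n ∈ A, (1/L) * ∑ p ∈ P, (if p ∣ n then (1:ℝ)/n else 0) :=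
          Finset.sum_congr rfl hterm
      _ = (1/L) * ∑ n ∈ A, ∑ p ∈ P, (if p ∣ n then (1:ℝ)/n else 0) := by
          rw [Finset.mul_sum]
      _ = (1/L) * ∑ p ∈ P, ∑ n ∈ A, (if p ∣ n then (1:ℝ)/n else 0) := by
          rw [Finset.sum_comm]
      _ = (1/L) * ∑ p ∈ P, ∑ n ∈ A.filter (fun n => p ∣ n), (1:ℝ)/n := by
          congr 1
          exact Finset.sum_congr rfl fun p _ => (Finset.sum_filter _ _).symm
  set T := ∑ p ∈ P, ∑ n ∈ A.filter (fun n => p ∣ n), (1:ℝ)/n with hTdef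
  have hLA : logAvg A (fun n => sieveWeight H1 H2 n) = ((1/L) * T) / S := by
    rw [logAvg, ← hSdef, hsum]
  -- aggregate bound
  have hagg : |(1/L) * T - S| ≤ K := by
    have hSL : S * L = ∑ p ∈ P, S / p := by
      rw [hLdef, Finset.mul_sum]
      exact Finset.sum_congr rfl fun p _ => by rw [mul_one_div]
    have hdiff : T - S * L = ∑ p ∈ P, ((∑ n ∈ A.filter (fun n => p ∣ n), (1:ℝ)/n) - S / p) := by
      rw [hSL, hTdef, Finset.sum_sub_distrib]
    have hbound : |T - S * L| ≤ K * L := by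
      rw [hdiff]
      refine le_trans (Finset.abs_sum_le_sum_abs _ _) ?_
      rw [hLdef, Finset.mul_sum]
      refine Finset.sum_le_sum fun p hp => ?_
      have hp0 : (0:ℝ) < p := by
        have := (hPfact p hp).1.pos
        exact_mod_cast this
      have heq : (∑ n ∈ A.filter (fun n => p ∣ n), (1:ℝ)/n) - S / p
          = ((p:ℝ) * (∑ n ∈ A.filter (fun n => p ∣ n), (1:ℝ)/n) - S) / p := by
        field_simp
      rw [heq, abs_div, abs_of_pos hp0, mul_one_div]
      gcongr
      exact hper p hp
    have : (1/L) * T - S = (T - S * L) / L := by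
      field_simp
    rw [this, abs_div, abs_of_pos hL0]
    rw [div_le_iff₀ hL0]
    linarith [hbound]
  -- finish
  have hfin : |((1/L) * T) / S - 1| ≤ ε ^ 2 := by
    have h1 : ((1/L) * T) / S - 1 = ((1/L) * T - S) / S := by
      field_simp
    rw [h1, abs_div, abs_of_pos hS0, div_le_iff₀ hS0]
    have h2 : K ≤ ε^2 * S := by
      have := mul_le_mul_of_nonneg_left hSK (le_of_lt (by positivity : (0:ℝ) < ε^2))
      calc K = ε^2 * (K / ε^2) := by field_simp
        _ ≤ ε^2 * S := this
    linarith [hagg]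
  rw [hLA, one_mul]
  exact hfin
end

section
/- Second moment of the sieve weight: there exists an absolute constant C > 0 such that for every 0 < ε < 1/2 the following holds for parameters 1/ε < w < H_1 < H_2 < H_3 < H_4 with w sufficiently large depending on ε and each of H_1, H_2, H_3, H_4 sufficiently large depending on ε and the preceding parameters, with W := ∏_{p ≤ w} p: |E^log_{H_3 < n ≤ H_4, gcd(n,W)=1} g(n)² − 1| ≤ C·ε², where g(n) := E^log_{H_1 < p ≤ H_2} p·1_{p ∣ n} (logarithmic average over primes p). -/
open Finset Filter Topology

lemma prime_recip_tendsto :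
    Tendsto (fun n => ∑ p ∈ (Finset.range n).filter Nat.Prime, (1:ℝ)/p) atTop atTop := by
  have h := not_summable_one_div_on_primes
  rw [not_summable_iff_tendsto_nat_atTop_of_nonneg
    (fun n => Set.indicator_nonneg (fun p _ => by positivity) n)] at h
  refine h.congr fun n => ?_
  rw [Finset.sum_filter]
  exact Finset.sum_congr rfl fun i _ => by
    by_cases hi : Nat.Prime i <;> simp [hi, Set.indicator]



lemma sieveWeight_eq (H1 H2 n : ℕ) :
    sieveWeight H1 H2 n
      = (∑ p ∈ primesIoc H1 H2, if p ∣ n then (1:ℝ) else 0)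
        / (∑ p ∈ primesIoc H1 H2, (1:ℝ)/p) := by
  unfold sieveWeight logAvg
  congr 1
  refine Finset.sum_congr rfl fun p hp => ?_
  have hp' : p.Prime := (Finset.mem_filter.mp hp).2
  have hp0 : (p:ℝ) ≠ 0 := by exact_mod_cast hp'.pos.ne'
  by_cases h : p ∣ n <;> field_simp [h]

lemma primorialW_pos (w : ℕ) : 0 < primorialW w :=
  Finset.prod_pos fun p hp => (Finset.mem_filter.mp hp).2.pos

lemma coprime_primorial {w H1 H2 : ℕ} (hw : w < H1) {p : ℕ} (hp : p ∈ primesIoc H1 H2) :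
    Nat.Coprime p (primorialW w) := by
  obtain ⟨hmem, hprime⟩ := Finset.mem_filter.mp hp
  rw [Finset.mem_Ioc] at hmem
  refine Nat.Coprime.prod_right fun q hq => ?_
  obtain ⟨hqr, hqp⟩ := Finset.mem_filter.mp hq
  rw [Finset.mem_range] at hqr
  exact (Nat.coprime_primes hprime hqp).mpr (by omega)

section Main

variable (W H3 : ℕ)

noncomputable def DD (x : ℕ) : ℝ :=
  ∑ n ∈ (Finset.Ioc H3 x).filter (fun n => Nat.gcd n W = 1), (1:ℝ)/n

noncomputable def ND (d x : ℕ) : ℝ :=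
  ∑ n ∈ (Finset.Ioc H3 x).filter (fun n => Nat.gcd n W = 1),
    (if d ∣ n then (1:ℝ)/n else 0)

end Main


lemma rescale (W d H3 x : ℕ) (hd : 0 < d) (hdW : Nat.Coprime d W) :
    (d:ℝ) * ∑ n ∈ (Finset.Ioc H3 x).filter (fun n => Nat.gcd n W = 1),
        (if d ∣ n then (1:ℝ)/n else 0)
      = ∑ m ∈ (Finset.Ioc (H3/d) (x/d)).filter (fun m => Nat.gcd m W = 1), (1:ℝ)/m := by
  classical
  rw [← Finset.sum_filter, Finset.mul_sum]
  refine Finset.sum_nbij' (fun n => n / d) (fun m => d * m) ?_ ?_ ?_ ?_ ?_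
  · intro n hn
    simp only [Finset.mem_filter, Finset.mem_Ioc] at hn ⊢
    obtain ⟨⟨⟨h1, h2⟩, h3⟩, h4⟩ := hn
    refine ⟨⟨Nat.div_lt_div_of_lt_of_dvd h4 h1, Nat.div_le_div_right h2⟩, ?_⟩
    exact Nat.Coprime.coprime_dvd_left (Nat.div_dvd_of_dvd h4) h3
  · intro m hm
    simp only [Finset.mem_filter, Finset.mem_Ioc] at hm ⊢
    obtain ⟨⟨h1, h2⟩, h3⟩ := hm
    refine ⟨⟨⟨?_, ?_⟩, ?_⟩, Dvd.intro m rfl⟩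
    · exact lt_of_lt_of_eq ((Nat.div_lt_iff_lt_mul hd).mp h1) (mul_comm m d)
    · exact le_of_eq_of_le (mul_comm d m) ((Nat.le_div_iff_mul_le hd).mp h2)
    · exact Nat.Coprime.mul hdW h3
  · intro n hn
    simp only [Finset.mem_filter, Finset.mem_Ioc] at hn
    exact Nat.mul_div_cancel' hn.2
  · intro m _
    exact Nat.mul_div_cancel_left _ hd
  · intro n hn
    simp only [Finset.mem_filter, Finset.mem_Ioc] at hn
    obtain ⟨⟨⟨h1, _⟩, _⟩, h4⟩ := hn
    obtain ⟨m, rfl⟩ := h4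
    show (d:ℝ) * (1/(d*m : ℕ)) = 1/((d*m : ℕ)/d : ℕ)
    rw [Nat.mul_div_cancel_left _ hd]
    have hm : 0 < m := by
      rcases Nat.eq_zero_or_pos m with h | h
      · subst h; rw [mul_zero] at h1; exact absurd h1 (Nat.not_lt_zero H3)
      · exact h
    have hd' : (0:ℝ) < d := by exact_mod_cast hd
    have hm' : (0:ℝ) < m := by exact_mod_cast hm
    push_cast
    field_simp


lemma tail_small (W d x : ℕ) (hd : 0 < d) (hx : 0 < x) :
    ∑ m ∈ (Finset.Ioc (x/d) x).filter (fun m => Nat.gcd m W = 1), (1:ℝ)/m ≤ d := by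
  classical
  have hx' : (0:ℝ) < x := by exact_mod_cast hx
  have hd' : (0:ℝ) < d := by exact_mod_cast hd
  calc ∑ m ∈ (Finset.Ioc (x/d) x).filter (fun m => Nat.gcd m W = 1), (1:ℝ)/m
      ≤ ∑ m ∈ Finset.Ioc (x/d) x, (1:ℝ)/m := by
        refine Finset.sum_le_sum_of_subset_of_nonneg (Finset.filter_subset _ _) ?_
        intro m _ _; positivity
    _ ≤ (Finset.Ioc (x/d) x).card • ((d:ℝ)/x) := by
        refine Finset.sum_le_card_nsmul _ _ _ ?_
        intro m hm
        rw [Finset.mem_Ioc] at hm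
        have h1 : x/d + 1 ≤ m := hm.1
        have hm0 : (0:ℝ) < m := by
          exact_mod_cast lt_of_lt_of_le (Nat.succ_pos _) h1
        have key : (x:ℝ) ≤ d * (x/d + 1 : ℕ) := by
          have : x < (x/d + 1) * d := (Nat.div_lt_iff_lt_mul hd).mp (Nat.lt_succ_self _)
          exact_mod_cast le_of_lt (lt_of_lt_of_eq this (mul_comm _ _))
        have h2 : (1:ℝ)/m ≤ 1/(x/d + 1 : ℕ) := by
          apply one_div_le_one_div_of_le
          · exact_mod_cast Nat.succ_pos (x/d)
          · exact_mod_cast h1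
        refine h2.trans ?_
        rw [div_le_div_iff₀ (by exact_mod_cast Nat.succ_pos (x/d)) hx']
        linarith [key]
    _ ≤ d := by
        rw [nsmul_eq_mul]
        have hcard : ((Finset.Ioc (x/d) x).card : ℝ) ≤ x := by
          rw [Nat.card_Ioc]; exact_mod_cast Nat.sub_le _ _
        calc ((Finset.Ioc (x/d) x).card : ℝ) * (d/x) ≤ x * (d/x) := by
              apply mul_le_mul_of_nonneg_right hcard; positivity
          _ = d := by field_simp

lemma U_le (W y : ℕ) :
    ∑ m ∈ (Finset.Ioc 0 y).filter (fun m => Nat.gcd m W = 1), (1:ℝ)/m ≤ y := by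
  classical
  calc ∑ m ∈ (Finset.Ioc 0 y).filter (fun m => Nat.gcd m W = 1), (1:ℝ)/m
      ≤ ((Finset.Ioc 0 y).filter (fun m => Nat.gcd m W = 1)).card • (1:ℝ) := by
        refine Finset.sum_le_card_nsmul _ _ _ ?_
        intro m hm
        simp only [Finset.mem_filter, Finset.mem_Ioc] at hm
        have : (1:ℝ) ≤ m := by exact_mod_cast hm.1.1
        rw [div_le_one (by linarith)]; linarith
    _ ≤ y := by
        rw [nsmul_eq_mul, mul_one]
        have := (Finset.card_filter_le (Finset.Ioc 0 y) (fun m => Nat.gcd m W = 1)).trans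
          (le_of_eq (Nat.card_Ioc 0 y))
        exact_mod_cast this.trans (Nat.sub_le _ _)

lemma split_sum (W a b : ℕ) (hab : a ≤ b) :
    ∑ m ∈ (Finset.Ioc a b).filter (fun m => Nat.gcd m W = 1), (1:ℝ)/m
      = ∑ m ∈ (Finset.Ioc 0 b).filter (fun m => Nat.gcd m W = 1), (1:ℝ)/m
        - ∑ m ∈ (Finset.Ioc 0 a).filter (fun m => Nat.gcd m W = 1), (1:ℝ)/m := by
  classical
  have h := Finset.sum_Ioc_consecutive (fun m => if Nat.gcd m W = 1 then (1:ℝ)/m else 0)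
    (Nat.zero_le a) hab
  simp only [Finset.sum_filter]
  linarith [h]


lemma sum_Ioc_tendsto (g : ℕ → ℝ)
    (h : Tendsto (fun n => ∑ k ∈ Finset.range n, g k) atTop atTop) (a : ℕ) :
    Tendsto (fun K => ∑ k ∈ Finset.Ioc a K, g k) atTop atTop := by
  have h2 := (h.comp (tendsto_add_atTop_nat 1)).atTop_add
    (tendsto_const_nhds (x := -(∑ k ∈ Finset.range (a+1), g k)))
  refine Tendsto.congr' ?_ h2
  filter_upwards [eventually_ge_atTop a] with K hK
  rw [← Finset.Ico_add_one_add_one_eq_Ioc, Finset.sum_Ico_eq_sub _ (by omega)]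
  simp [sub_eq_add_neg]

lemma D_tendsto (W H3 : ℕ) (hW : 0 < W) :
    Tendsto (fun x => ∑ n ∈ (Finset.Ioc H3 x).filter (fun n => Nat.gcd n W = 1), (1:ℝ)/n)
      atTop atTop := by
  classical
  have hW' : (0:ℝ) < W := by exact_mod_cast hW
  have hcomp : Tendsto (fun K => ∑ k ∈ Finset.Ioc H3 K, (1:ℝ)/(k*W+1)) atTop atTop := by
    have hh : Tendsto (fun K => ∑ k ∈ Finset.Ioc H3 K, (1/W) * ((1:ℝ)/(k+1))) atTop atTop := by
      have := (sum_Ioc_tendsto (fun k => (1:ℝ)/(k+1))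
        (by exact_mod_cast Real.tendsto_sum_range_one_div_nat_succ_atTop) H3).const_mul_atTop
        (show (0:ℝ) < 1/W by positivity)
      refine this.congr fun K => ?_
      rw [Finset.mul_sum]
    refine tendsto_atTop_mono ?_ hh
    intro K
    refine Finset.sum_le_sum fun k _ => ?_
    rw [div_mul_div_comm, one_mul]
    apply one_div_le_one_div_of_le
    · positivity
    · have hW1 : (1:ℝ) ≤ W := by exact_mod_cast hW
      push_cast
      nlinarith [(Nat.cast_nonneg k : (0:ℝ) ≤ k)]
  set K : ℕ → ℕ := fun x => (x - 1) / W with hK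
  have hKt : Tendsto K atTop atTop := by
    rw [tendsto_atTop_atTop]
    intro M
    exact ⟨M * W + 1, fun x hx => (Nat.le_div_iff_mul_le hW).mpr (by omega)⟩
  have hmono : ∀ x, ∑ k ∈ Finset.Ioc H3 (K x), (1:ℝ)/(k*W+1)
      ≤ ∑ n ∈ (Finset.Ioc H3 x).filter (fun n => Nat.gcd n W = 1), (1:ℝ)/n := by
    intro x
    have hinj : ∀ a ∈ Finset.Ioc H3 (K x), ∀ b ∈ Finset.Ioc H3 (K x),
        a * W + 1 = b * W + 1 → a = b := by
      intro a _ b _ hab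
      have : a * W = b * W := by omega
      exact Nat.eq_of_mul_eq_mul_right hW this
    have hsub : Finset.image (fun k => k*W+1) (Finset.Ioc H3 (K x))
        ⊆ (Finset.Ioc H3 x).filter (fun n => Nat.gcd n W = 1) := by
      intro n hn
      simp only [Finset.mem_image, Finset.mem_Ioc] at hn
      obtain ⟨k, ⟨hk1, hk2⟩, rfl⟩ := hn
      simp only [Finset.mem_filter, Finset.mem_Ioc]
      have hkWx : k * W + 1 ≤ x := by
        have h1 : 0 < k * W := Nat.mul_pos (by omega) hW
        have h2 : k * W ≤ x - 1 := (Nat.le_div_iff_mul_le hW).mp hk2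
        have hx1 : 1 ≤ x := le_trans h1 (h2.trans (Nat.sub_le x 1))
        calc k*W+1 ≤ (x-1)+1 := Nat.add_le_add_right h2 1
          _ = x := Nat.succ_pred_eq_of_pos hx1
      refine ⟨⟨?_, hkWx⟩, ?_⟩
      · have : k ≤ k * W := Nat.le_mul_of_pos_right k hW
        omega
      · rw [add_comm, Nat.gcd_add_mul_right_left W 1 k]
        exact Nat.gcd_one_left W
    calc ∑ k ∈ Finset.Ioc H3 (K x), (1:ℝ)/(k*W+1)
        = ∑ k ∈ Finset.Ioc H3 (K x), (fun n : ℕ => (1:ℝ)/n) (k*W+1) := by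
          refine Finset.sum_congr rfl fun k _ => ?_
          push_cast; ring_nf
      _ = ∑ n ∈ Finset.image (fun k => k*W+1) (Finset.Ioc H3 (K x)), (1:ℝ)/n :=
          (Finset.sum_image (f := fun n : ℕ => (1:ℝ)/n) hinj).symm
      _ ≤ _ := Finset.sum_le_sum_of_subset_of_nonneg hsub (fun n _ _ => by positivity)
  exact tendsto_atTop_mono hmono (hcomp.comp hKt)

lemma ND_div_DD_tendsto (W H3 d : ℕ) (hW : 0 < W) (hd : 0 < d) (hdW : Nat.Coprime d W) :
    Tendsto (fun x => ND W H3 d x / DD W H3 x) atTop (𝓝 (1/(d:ℝ))) := by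
  classical
  have hD := D_tendsto W H3 hW
  have hd' : (0:ℝ) < d := by exact_mod_cast hd
  set U : ℕ → ℝ := fun y => ∑ m ∈ (Finset.Ioc 0 y).filter (fun m => Nat.gcd m W = 1), (1:ℝ)/m
    with hU
  have hUnonneg : ∀ y, 0 ≤ U y := fun y => Finset.sum_nonneg fun m _ => by positivity
  have hbnd : ∀ᶠ x in atTop, |(d:ℝ) * ND W H3 d x - DD W H3 x| ≤ (d + H3 : ℝ) := by
    filter_upwards [eventually_ge_atTop (max (max d 1) H3)] with x hx
    have hxd : d ≤ x := le_trans (le_trans (le_max_left d 1) (le_max_left _ H3)) hx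
    have hx1 : 0 < x := lt_of_lt_of_le (by omega) hx
    have hH3x : H3 ≤ x := le_trans (le_max_right _ H3) hx
    have e1 : (d:ℝ) * ND W H3 d x
        = ∑ m ∈ (Finset.Ioc (H3/d) (x/d)).filter (fun m => Nat.gcd m W = 1), (1:ℝ)/m :=
      rescale W d H3 x hd hdW
    rw [e1]
    unfold DD
    rw [split_sum W (H3/d) (x/d) (Nat.div_le_div_right hH3x), split_sum W H3 x hH3x]
    have a1 : U x - U (x/d)
        = ∑ m ∈ (Finset.Ioc (x/d) x).filter (fun m => Nat.gcd m W = 1), (1:ℝ)/m :=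
      (split_sum W (x/d) x (Nat.div_le_self x d)).symm
    have a1nonneg : 0 ≤ U x - U (x/d) := by
      rw [a1]; exact Finset.sum_nonneg fun m _ => by positivity
    have a1le : U x - U (x/d) ≤ d := by rw [a1]; exact tail_small W d x hd hx1
    have a2 : U H3 - U (H3/d)
        = ∑ m ∈ (Finset.Ioc (H3/d) H3).filter (fun m => Nat.gcd m W = 1), (1:ℝ)/m :=
      (split_sum W (H3/d) H3 (Nat.div_le_self H3 d)).symm
    have a2nonneg : 0 ≤ U H3 - U (H3/d) := by
      rw [a2]; exact Finset.sum_nonneg fun m _ => by positivity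
    have a2le : U H3 - U (H3/d) ≤ H3 := by
      have := U_le W H3
      have := hUnonneg (H3/d)
      simp only [hU]
      linarith [this]
    rw [abs_le]
    constructor <;> simp only [hU] at a1nonneg a1le a2nonneg a2le ⊢ <;> linarith
  have hDpos : ∀ᶠ x in atTop, 0 < DD W H3 x := hD.eventually_gt_atTop 0
  have herr : Tendsto (fun x => ((d:ℝ) * ND W H3 d x - DD W H3 x) / ((d:ℝ) * DD W H3 x))
      atTop (𝓝 0) := by
    have hrhs : Tendsto (fun x => ((d:ℝ) + H3) / ((d:ℝ) * DD W H3 x)) atTop (𝓝 0) :=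
      tendsto_const_nhds.div_atTop (hD.const_mul_atTop hd')
    refine squeeze_zero_norm' ?_ hrhs
    filter_upwards [hbnd, hDpos] with x hb hp
    rw [Real.norm_eq_abs, abs_div, abs_of_pos (by positivity : (0:ℝ) < (d:ℝ) * DD W H3 x)]
    exact (div_le_div_iff_of_pos_right (by positivity : (0:ℝ) < (d:ℝ) * DD W H3 x)).mpr hb
  have heq : ∀ᶠ x in atTop, ND W H3 d x / DD W H3 x
      = 1/(d:ℝ) + ((d:ℝ) * ND W H3 d x - DD W H3 x) / ((d:ℝ) * DD W H3 x) := by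
    filter_upwards [hDpos] with x hp
    field_simp
    ring
  have := (tendsto_const_nhds (x := 1/(d:ℝ))).add herr
  rw [add_zero] at this
  exact Tendsto.congr' (heq.mono fun x hx => hx.symm) this

lemma main_tendsto (w H1 H2 H3 : ℕ) (hwH1 : w < H1)
    (hL : 0 < ∑ p ∈ primesIoc H1 H2, (1:ℝ)/p) :
    Tendsto (fun x => logAvg ((Finset.Ioc H3 x).filter
        fun n => Nat.gcd n (primorialW w) = 1)
        (fun n => (sieveWeight H1 H2 n)^2)) atTop
      (𝓝 ((∑ p ∈ primesIoc H1 H2, ∑ q ∈ primesIoc H1 H2, (1:ℝ)/(Nat.lcm p q))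
          / (∑ p ∈ primesIoc H1 H2, (1:ℝ)/p)^2)) := by
  classical
  set W := primorialW w with hWdef
  set P := primesIoc H1 H2 with hPdef
  set L := ∑ p ∈ P, (1:ℝ)/p with hLdef
  have hW : 0 < W := primorialW_pos w
  have hD := D_tendsto W H3 hW
  have hLne : L ≠ 0 := ne_of_gt hL
  -- expansion of the numerator
  have expand : ∀ n : ℕ, 0 < n → (sieveWeight H1 H2 n)^2 / n
      = (∑ p ∈ P, ∑ q ∈ P, (if Nat.lcm p q ∣ n then (1:ℝ)/n else 0)) / L^2 := by
    intro n hn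
    have hn' : (0:ℝ) < n := by exact_mod_cast hn
    rw [sieveWeight_eq]
    have h1 : (∑ p ∈ P, (if p ∣ n then (1:ℝ) else 0))^2
        = ∑ p ∈ P, ∑ q ∈ P, (if Nat.lcm p q ∣ n then (1:ℝ) else 0) := by
      rw [sq, Finset.sum_mul_sum]
      refine Finset.sum_congr rfl fun p _ => Finset.sum_congr rfl fun q _ => ?_
      by_cases hp : p ∣ n <;> by_cases hq : q ∣ n <;>
        simp [hp, hq, Nat.lcm_dvd_iff]
    have h2 : ∑ p ∈ P, ∑ q ∈ P, (if Nat.lcm p q ∣ n then (1:ℝ)/n else 0)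
        = (∑ p ∈ P, ∑ q ∈ P, (if Nat.lcm p q ∣ n then (1:ℝ) else 0))/n := by
      rw [Finset.sum_div]
      refine Finset.sum_congr rfl fun p _ => ?_
      rw [Finset.sum_div]
      refine Finset.sum_congr rfl fun q _ => ?_
      by_cases h : Nat.lcm p q ∣ n <;> simp [h]
    rw [h2, ← h1]
    rw [div_pow]
    ring
  have hNUM : ∀ x, ∑ n ∈ (Finset.Ioc H3 x).filter (fun n => Nat.gcd n W = 1),
      (sieveWeight H1 H2 n)^2 / n
      = (∑ p ∈ P, ∑ q ∈ P, ND W H3 (Nat.lcm p q) x) / L^2 := by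
    intro x
    rw [Finset.sum_congr rfl (fun n hn => expand n ?pos)]
    case pos =>
      have := (Finset.mem_filter.mp hn).1
      rw [Finset.mem_Ioc] at this
      omega
    rw [← Finset.sum_div]
    congr 1
    unfold ND
    rw [Finset.sum_comm]
    exact Finset.sum_congr rfl fun p _ => Finset.sum_comm
  -- each ratio converges
  have hrat : ∀ p ∈ P, ∀ q ∈ P,
      Tendsto (fun x => ND W H3 (Nat.lcm p q) x / DD W H3 x) atTop
        (𝓝 (1/(Nat.lcm p q : ℝ))) := by
    intro p hp q hq
    have hpP : p.Prime := (Finset.mem_filter.mp hp).2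
    have hqP : q.Prime := (Finset.mem_filter.mp hq).2
    have hlcmpos : 0 < Nat.lcm p q := Nat.lcm_pos hpP.pos hqP.pos
    have hlcmcop : Nat.Coprime (Nat.lcm p q) W := by
      have h1 : Nat.lcm p q ∣ p * q := Nat.lcm_dvd (dvd_mul_right p q) (dvd_mul_left q p)
      have h2 : Nat.Coprime (p * q) W :=
        Nat.Coprime.mul (coprime_primorial hwH1 hp) (coprime_primorial hwH1 hq)
      exact Nat.Coprime.coprime_dvd_left h1 h2
    exact ND_div_DD_tendsto W H3 (Nat.lcm p q) hW hlcmpos hlcmcop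
  have hsum : Tendsto (fun x => ∑ p ∈ P, ∑ q ∈ P, ND W H3 (Nat.lcm p q) x / DD W H3 x)
      atTop (𝓝 (∑ p ∈ P, ∑ q ∈ P, (1:ℝ)/(Nat.lcm p q))) := by
    refine tendsto_finset_sum _ fun p hp => tendsto_finset_sum _ fun q hq => hrat p hp q hq
  have hDpos : ∀ᶠ x in atTop, 0 < DD W H3 x := hD.eventually_gt_atTop 0
  have heq : ∀ᶠ x in atTop,
      (∑ p ∈ P, ∑ q ∈ P, ND W H3 (Nat.lcm p q) x / DD W H3 x) / L^2
      = logAvg ((Finset.Ioc H3 x).filter fun n => Nat.gcd n W = 1)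
          (fun n => (sieveWeight H1 H2 n)^2) := by
    filter_upwards [hDpos] with x hp
    unfold logAvg
    have hDD : (∑ n ∈ (Finset.Ioc H3 x).filter (fun n => Nat.gcd n W = 1), (1:ℝ)/n)
        = DD W H3 x := rfl
    rw [hDD, hNUM x]
    have h3 : ∑ p ∈ P, ∑ q ∈ P, ND W H3 (Nat.lcm p q) x / DD W H3 x
        = (∑ p ∈ P, ∑ q ∈ P, ND W H3 (Nat.lcm p q) x) / DD W H3 x := by
      rw [Finset.sum_div]
      exact Finset.sum_congr rfl fun p _ => by rw [Finset.sum_div]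
    rw [h3]
    ring
  have := (hsum.div_const (L^2)).congr' heq
  exact this

lemma ell_bound (H1 H2 : ℕ) (hL : 0 < ∑ p ∈ primesIoc H1 H2, (1:ℝ)/p) :
    |(∑ p ∈ primesIoc H1 H2, ∑ q ∈ primesIoc H1 H2, (1:ℝ)/(Nat.lcm p q))
      / (∑ p ∈ primesIoc H1 H2, (1:ℝ)/p)^2 - 1|
      ≤ 1 / (∑ p ∈ primesIoc H1 H2, (1:ℝ)/p) := by
  classical
  set P := primesIoc H1 H2 with hP
  set L := ∑ p ∈ P, (1:ℝ)/p with hLdef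
  set E := ∑ p ∈ P, ((1:ℝ)/p - 1/(p:ℝ)^2) with hEdef
  have hprime : ∀ p ∈ P, p.Prime := fun p hp => (Finset.mem_filter.mp hp).2
  have inner : ∀ p ∈ P, ∑ q ∈ P, (1:ℝ)/(Nat.lcm p q)
      = (1/p) * L + ((1:ℝ)/p - 1/(p:ℝ)^2) := by
    intro p hp
    have hpP := hprime p hp
    have step : ∀ q ∈ P, (1:ℝ)/(Nat.lcm p q)
        = (1/(p:ℝ))*(1/(q:ℝ)) + (if q = p then ((1:ℝ)/p - 1/(p:ℝ)^2) else 0) := by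
      intro q hq
      have hqP := hprime q hq
      by_cases h : q = p
      · subst h
        rw [Nat.lcm_self]
        have : (q:ℝ) ≠ 0 := by exact_mod_cast hqP.pos.ne'
        rw [if_pos rfl]
        field_simp
        ring
      · have hco : Nat.Coprime p q := (Nat.coprime_primes hpP hqP).mpr (Ne.symm h)
        rw [Nat.Coprime.lcm_eq_mul hco]
        simp only [if_neg h]
        push_cast
        rw [add_zero, div_mul_div_comm, one_mul]
    rw [Finset.sum_congr rfl step, Finset.sum_add_distrib]
    congr 1
    · rw [← Finset.mul_sum]
    · rw [Finset.sum_ite_eq' P p (fun _ => (1:ℝ)/p - 1/(p:ℝ)^2), if_pos hp]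
  have total : ∑ p ∈ P, ∑ q ∈ P, (1:ℝ)/(Nat.lcm p q) = L^2 + E := by
    rw [Finset.sum_congr rfl inner, Finset.sum_add_distrib, ← Finset.sum_mul, sq]
  have hE0 : 0 ≤ E := by
    refine Finset.sum_nonneg fun p hp => ?_
    have h2 : (2:ℝ) ≤ p := by exact_mod_cast (hprime p hp).two_le
    have hp0 : (0:ℝ) < p := by linarith
    rw [sub_nonneg, sq]
    apply one_div_le_one_div_of_le hp0
    nlinarith
  have hEL : E ≤ L := by
    refine Finset.sum_le_sum fun p hp => ?_
    have h2 : (2:ℝ) ≤ p := by exact_mod_cast (hprime p hp).two_le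
    have : 0 ≤ 1/(p:ℝ)^2 := by positivity
    linarith
  rw [total]
  have hLne : L ≠ 0 := ne_of_gt hL
  have : (L^2 + E)/L^2 - 1 = E/L^2 := by field_simp; ring
  rw [this, abs_of_nonneg (by positivity)]
  rw [div_le_div_iff₀ (by positivity) hL]
  calc E * L ≤ L * L := by nlinarith
    _ = 1 * L^2 := by ring

lemma primes_sum_tendsto (H1 : ℕ) :
    Tendsto (fun H2 => ∑ p ∈ primesIoc H1 H2, (1:ℝ)/p) atTop atTop := by
  classical
  have hrange : Tendsto (fun n => ∑ k ∈ Finset.range n,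
      (if Nat.Prime k then (1:ℝ)/k else 0)) atTop atTop := by
    refine prime_recip_tendsto.congr fun n => ?_
    rw [Finset.sum_filter]
  have h := sum_Ioc_tendsto (fun p => if Nat.Prime p then (1:ℝ)/p else 0) hrange H1
  refine h.congr fun H2 => ?_
  rw [← Finset.sum_filter]
  rfl


/-- **Second moment of the sieve weight.** There is an absolute constant `C > 0` such
that for `0 < ε < 1/2` and parameters `1/ε < w < H₁ < H₂ < H₃ < H₄`, with `w`
sufficiently large depending on `ε` and each of `H₁, H₂, H₃, H₄` sufficiently large
depending on `ε` and the preceding parameters, with `W := ∏_{p ≤ w} p`, one has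
`E^log_{H₃ < n ≤ H₄, (n,W)=1} g(n)² = 1 + O(ε²)`. -/
theorem sieve_weight_second_moment :
    ∃ C : ℝ, 0 < C ∧ ∀ ε : ℝ, 0 < ε → ε < 1 / 2 →
      ∃ w0 : ℕ, ∀ w : ℕ, 1 / ε < (w : ℝ) → w0 ≤ w →
        ∃ H10 : ℕ, ∀ H1 : ℕ, w < H1 → H10 ≤ H1 →
          ∃ H20 : ℕ, ∀ H2 : ℕ, H1 < H2 → H20 ≤ H2 →
            ∃ H30 : ℕ, ∀ H3 : ℕ, H2 < H3 → H30 ≤ H3 →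
              ∃ H40 : ℕ, ∀ H4 : ℕ, H3 < H4 → H40 ≤ H4 →
                |logAvg ((Finset.Ioc H3 H4).filter
                      fun n => Nat.gcd n (primorialW w) = 1)
                    (fun n => (sieveWeight H1 H2 n) ^ 2) - 1| ≤ C * ε ^ 2 := by
  classical
  refine ⟨1, one_pos, fun ε hε hε2 => ⟨1, fun w hw1 hw2 => ⟨1, fun H1 hwH1 _ => ?_⟩⟩⟩
  obtain ⟨H20, h20⟩ := eventually_atTop.mp
    ((primes_sum_tendsto H1).eventually_ge_atTop (2/ε^2))
  refine ⟨H20, fun H2 hH12 hH2ge => ⟨1, fun H3 hH23 _ => ?_⟩⟩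
  have hL : 2/ε^2 ≤ ∑ p ∈ primesIoc H1 H2, (1:ℝ)/p := h20 H2 hH2ge
  have hLpos : 0 < ∑ p ∈ primesIoc H1 H2, (1:ℝ)/p :=
    lt_of_lt_of_le (by positivity) hL
  have hT := main_tendsto w H1 H2 H3 hwH1 hLpos
  set ℓ := (∑ p ∈ primesIoc H1 H2, ∑ q ∈ primesIoc H1 H2, (1:ℝ)/(Nat.lcm p q))
      / (∑ p ∈ primesIoc H1 H2, (1:ℝ)/p)^2 with hldef
  have hlb : |ℓ - 1| ≤ ε^2/2 := by
    refine (ell_bound H1 H2 hLpos).trans ?_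
    have h1 : 1/(∑ p ∈ primesIoc H1 H2, (1:ℝ)/p) ≤ 1/(2/ε^2) :=
      one_div_le_one_div_of_le (by positivity) hL
    rw [one_div_div] at h1
    linarith
  obtain ⟨N, hN⟩ := Metric.tendsto_atTop.mp hT (ε^2/2) (by positivity)
  refine ⟨max N (H3+1), fun H4 hH34 hH4ge => ?_⟩
  have h1 := hN H4 (le_trans (le_max_left _ _) hH4ge)
  rw [Real.dist_eq] at h1
  have habs := abs_sub_le
    (logAvg ((Finset.Ioc H3 H4).filter fun n => Nat.gcd n (primorialW w) = 1)
      (fun n => (sieveWeight H1 H2 n) ^ 2)) ℓ 1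
  rw [one_mul]
  linarith [habs, h1, hlb]
end

section
/- Key dilation identity: there is a constant C > 0 depending only on k, a_1,…,a_k, b_1,…,b_k such that for every 0 < ε ≤ 1/2, every natural number a, every real x ≥ exp(exp(exp(a·ε^{−3}))), and every prime p ≤ log x, one has |f_x(a) − (−1)^k f_x(ap) − (−1)^k · E^log_{n ≤ x} λ(a_1 n + a p b_1)⋯λ(a_k n + a p b_k)·(p·1_{p∣n} − 1)| ≤ C·ε. -/
noncomputable def liouville (n : ℕ) : ℝ :=
  (-1 : ℝ) ^ (ArithmeticFunction.cardFactors n)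

noncomputable def corr (k : ℕ) (a b : Fin k → ℕ) (x : ℝ) (d : ℕ) : ℝ :=
  logAvg (Finset.Icc 1 ⌊x⌋₊) fun n => ∏ i, liouville (a i * n + d * b i)

lemma liouville_abs (n : ℕ) : |liouville n| = 1 := by
  simp [liouville, abs_pow]

lemma liouville_prime_mul {p q : ℕ} (hp : p.Prime) (hq : q ≠ 0) :
    liouville (p * q) = -liouville q := by
  unfold liouville
  rw [ArithmeticFunction.cardFactors_mul hp.ne_zero hq,
    ArithmeticFunction.cardFactors_apply_prime hp, pow_add, pow_one]
  ring

lemma sum_inv_Ioc_le {M' M : ℕ} (h1 : 1 ≤ M') (h2 : M' ≤ M) :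
    ∑ m ∈ Finset.Ioc M' M, (1 : ℝ) / m ≤ Real.log M - Real.log M' := by
  induction M, h2 using Nat.le_induction with
  | base => simp
  | succ M hM ih =>
    rw [Finset.sum_Ioc_succ_top hM]
    have hM1 : (1 : ℝ) ≤ M := by exact_mod_cast h1.trans hM
    have key : (1 : ℝ) / (M + 1) ≤ Real.log (M + 1) - Real.log M := by
      have h0 : (0 : ℝ) < M + 1 := by linarith
      have := Real.log_le_sub_one_of_pos (x := (M : ℝ) / (M + 1)) (by positivity)
      rw [Real.log_div (by linarith) (by linarith)] at this
      have : Real.log M - Real.log (M + 1) ≤ -(1 / (M + 1)) := by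
        rw [div_sub_one (by linarith)] at this
        calc Real.log M - Real.log (M+1) ≤ ((M:ℝ) - (M+1))/(M+1) := this
          _ = -(1/(M+1)) := by ring
      linarith
    push_cast
    push_cast at ih
    linarith

lemma log_le_sum_inv (M : ℕ) :
    Real.log (M + 1) ≤ ∑ n ∈ Finset.Icc 1 M, (1 : ℝ) / n := by
  have := log_add_one_le_harmonic M
  rw [harmonic_eq_sum_Icc] at this
  push_cast at this
  simpa [one_div] using this

lemma sum_dvd_reindex (p : ℕ) (hp : 0 < p) (M : ℕ) (F : ℕ → ℝ) :
    ∑ n ∈ Finset.Icc 1 M, (if p ∣ n then F n else 0)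
      = ∑ m ∈ Finset.Icc 1 (M / p), F (p * m) := by
  rw [← Finset.sum_filter]
  refine Finset.sum_nbij' (fun n => n / p) (fun m => p * m) ?_ ?_ ?_ ?_ ?_
  · intro n hn
    simp only [Finset.mem_filter, Finset.mem_Icc] at hn ⊢
    obtain ⟨⟨hn1, hnM⟩, d, rfl⟩ := hn
    rw [Nat.mul_div_cancel_left _ hp]
    have hd : 1 ≤ d := by
      rcases Nat.eq_zero_or_pos d with h | h
      · subst h; simp at hn1
      · exact h
    exact ⟨hd, Nat.le_div_iff_mul_le hp |>.mpr (by rwa [mul_comm] at hnM)⟩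
  · intro m hm
    simp only [Finset.mem_filter, Finset.mem_Icc] at hm ⊢
    obtain ⟨hm1, hmM⟩ := hm
    refine ⟨⟨Nat.mul_pos hp hm1, ?_⟩, Dvd.intro m rfl⟩
    rw [mul_comm]
    exact Nat.mul_le_of_le_div p m M hmM
  · intro n hn
    simp only [Finset.mem_filter] at hn
    exact Nat.mul_div_cancel' hn.2
  · intro m _
    exact Nat.mul_div_cancel_left _ hp
  · intro n hn
    simp only [Finset.mem_filter] at hn
    rw [Nat.mul_div_cancel' hn.2]


set_option maxHeartbeats 1000000 in
/-- **Key dilation identity.** There is a constant `C > 0` depending only on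
`k, a₁,…,a_k, b₁,…,b_k` such that for every `0 < ε ≤ 1/2`, every natural number `a`,
every `x ≥ exp(exp(exp(a ε⁻³)))` and every prime `p ≤ log x`, one has
`f_x(a) - (-1)^k f_x(ap) = (-1)^k E^log_{n ≤ x} λ(a₁n + apb₁)⋯λ(a_k n + apb_k)(p 1_{p ∣ n} - 1) + O(ε)`. -/
theorem key_dilation_identity (k : ℕ) (hk : 1 ≤ k)
    (a b : Fin k → ℕ) (ha : ∀ i, 1 ≤ a i) (hb : ∀ i, 1 ≤ b i) :
    ∃ C : ℝ, 0 < C ∧ ∀ ε : ℝ, 0 < ε → ε ≤ 1 / 2 → ∀ A : ℕ, 1 ≤ A →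
      ∀ x : ℝ, Real.exp (Real.exp (Real.exp (A * ε ^ (-3 : ℤ)))) ≤ x →
        ∀ p : ℕ, p.Prime → (p : ℝ) ≤ Real.log x →
          |corr k a b x A - (-1 : ℝ) ^ k * corr k a b x (A * p) -
              (-1 : ℝ) ^ k *
                logAvg (Finset.Icc 1 ⌊x⌋₊) (fun n =>
                  (∏ i, liouville (a i * n + A * p * b i)) *
                    ((p : ℝ) * (if p ∣ n then 1 else 0) - 1))| ≤ C * ε := by
  refine ⟨1, one_pos, ?_⟩
  intro ε hε hε2 A hA x hx p hp hpL
  have hp0 : 0 < p := hp.pos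
  have hp2 : 2 ≤ p := hp.two_le
  set L := Real.log x with hLdef
  -- epsilon facts
  have hu2 : (2 : ℝ) ≤ ε⁻¹ := by
    rw [show (2:ℝ) = (1/2)⁻¹ by norm_num]
    exact inv_anti₀ hε hε2
  have hu0 : (0 : ℝ) < ε⁻¹ := by positivity
  have hzp : ε ^ (-3 : ℤ) = ε⁻¹ ^ 3 := by
    rw [zpow_neg, ← inv_zpow]
    norm_cast
  have hs1 : ε⁻¹ ^ 3 ≤ (A : ℝ) * ε ^ (-3 : ℤ) := by
    rw [hzp]
    have hA1 : (1 : ℝ) ≤ A := by exact_mod_cast hA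
    nlinarith [mul_le_mul_of_nonneg_right hA1 (pow_pos hu0 3).le]
  have hx0 : (0 : ℝ) < x := lt_of_lt_of_le (Real.exp_pos _) hx
  have hL1 : Real.exp (Real.exp ((A : ℝ) * ε ^ (-3 : ℤ))) ≤ L := by
    rw [hLdef, ← Real.log_exp (Real.exp (Real.exp ((A : ℝ) * ε ^ (-3 : ℤ))))]
    exact Real.log_le_log (Real.exp_pos _) hx
  have hL0 : (0 : ℝ) < L := lt_of_lt_of_le (Real.exp_pos _) hL1
  have hlogL : Real.exp ((A : ℝ) * ε ^ (-3 : ℤ)) ≤ Real.log L := by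
    rw [← Real.log_exp (Real.exp ((A : ℝ) * ε ^ (-3 : ℤ)))]
    exact Real.log_le_log (Real.exp_pos _) hL1
  have hcube : 2 * ε⁻¹ + 1 ≤ ε⁻¹ ^ 3 := by
    nlinarith [mul_le_mul_of_nonneg_right hu2 hu0.le,
      mul_le_mul_of_nonneg_right (mul_le_mul_of_nonneg_right hu2 hu0.le) hu0.le]
  have hL16 : 16 * ε⁻¹ ^ 2 ≤ L := by
    have hlog16 : Real.log (16 * ε⁻¹ ^ 2) ≤ Real.log L := by
      rw [Real.log_mul (by norm_num) (by positivity), Real.log_pow]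
      have h16 : Real.log 16 ≤ 3 := by
        rw [show (16 : ℝ) = 2 ^ 4 by norm_num, Real.log_pow]
        have := Real.log_two_lt_d9
        push_cast
        linarith
      have hloginv : Real.log ε⁻¹ ≤ ε⁻¹ - 1 := Real.log_le_sub_one_of_pos hu0
      have hexp : (A : ℝ) * ε ^ (-3 : ℤ) + 1 ≤ Real.exp ((A : ℝ) * ε ^ (-3 : ℤ)) :=
        Real.add_one_le_exp _
      push_cast
      linarith
    calc 16 * ε⁻¹ ^ 2 = Real.exp (Real.log (16 * ε⁻¹ ^ 2)) :=
          (Real.exp_log (by positivity)).symm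
      _ ≤ Real.exp (Real.log L) := Real.exp_le_exp.mpr hlog16
      _ = L := Real.exp_log hL0
  have hL64 : (64 : ℝ) ≤ L := le_trans (by nlinarith) hL16
  set M := ⌊x⌋₊ with hMdef
  -- M facts
  have h2px : (2 * (p : ℝ)) ≤ x := by
    have hx_eq : x = Real.exp L := (Real.exp_log hx0).symm
    have hq : ((L / 2) + 1) ^ 2 ≤ Real.exp L := by
      have h1 := Real.add_one_le_exp (L / 2)
      have h2 : Real.exp L = Real.exp (L / 2) * Real.exp (L / 2) := by
        rw [← Real.exp_add]; ring_nf
      nlinarith [Real.exp_pos (L / 2)]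
    nlinarith
  have hM2p : 2 * p ≤ M := Nat.le_floor (by push_cast; linarith)
  have hM1 : 1 ≤ M := le_trans (by omega) hM2p
  set M' := M / p with hM'def
  have hM'1 : 1 ≤ M' := (Nat.le_div_iff_mul_le hp0).mpr (by omega)
  have hM'M : M' ≤ M := Nat.div_le_self M p
  have hM'real : (M : ℝ) / (2 * p) ≤ (M' : ℝ) := by
    have hdm := Nat.div_add_mod M p
    have hmod : M % p < p := Nat.mod_lt M hp0
    have hdm' : (p : ℝ) * (M' : ℝ) + ((M % p : ℕ) : ℝ) = M := by exact_mod_cast hdm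
    have hmod' : ((M % p : ℕ) : ℝ) < p := by exact_mod_cast hmod
    have hp2' : (2 : ℝ) ≤ p := by exact_mod_cast hp2
    have hM'1' : (1 : ℝ) ≤ M' := by exact_mod_cast hM'1
    rw [div_le_iff₀ (by positivity)]
    have hint : (p:ℝ) * 1 ≤ (p:ℝ) * (M':ℝ) :=
      mul_le_mul_of_nonneg_left hM'1' (by positivity)
    linarith [hint, hdm', hmod', hp2']
  -- abbreviations for the three sums and the denominator
  set D := ∑ n ∈ Finset.Icc 1 M, (1 : ℝ) / n with hDdef
  set SM := ∑ n ∈ Finset.Icc 1 M, (∏ i, liouville (a i * n + A * b i)) / (n : ℝ) with hSM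
  set SH := ∑ n ∈ Finset.Icc 1 M, (∏ i, liouville (a i * n + A * p * b i)) / (n : ℝ) with hSH
  set SM' := ∑ m ∈ Finset.Icc 1 M', (∏ i, liouville (a i * m + A * b i)) / (m : ℝ) with hSM'
  have hDL : L ≤ D := by
    have h1 : L ≤ Real.log ((M : ℝ) + 1) :=
      Real.log_le_log hx0 (le_of_lt (Nat.lt_floor_add_one x))
    calc L ≤ Real.log ((M : ℝ) + 1) := h1
      _ ≤ D := by have := log_le_sum_inv M; push_cast at this ⊢; exact this
  have hD0 : (0 : ℝ) < D := lt_of_lt_of_le hL0 hDL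
  have habs_g : ∀ n : ℕ, |∏ i, liouville (a i * n + A * b i)| = 1 := by
    intro n
    simp only [Finset.abs_prod, liouville_abs, Finset.prod_const_one]
  have hkey : ∀ m : ℕ, 1 ≤ m →
      (∏ i, liouville (a i * (p * m) + A * p * b i))
        = (-1 : ℝ) ^ k * ∏ i, liouville (a i * m + A * b i) := by
    intro m hm
    calc (∏ i, liouville (a i * (p * m) + A * p * b i))
        = ∏ i, (-1 : ℝ) * liouville (a i * m + A * b i) := by
          refine Finset.prod_congr rfl fun i _ => ?_
          rw [show a i * (p * m) + A * p * b i = p * (a i * m + A * b i) by ring,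
            liouville_prime_mul hp (Nat.add_pos_left (Nat.mul_pos (ha i) hm) _).ne']
          ring
      _ = (-1 : ℝ) ^ k * ∏ i, liouville (a i * m + A * b i) := by
          rw [Finset.prod_mul_distrib, Finset.prod_const, Finset.card_univ,
            Fintype.card_fin]
  -- the main sum identity
  have hsum : ∑ n ∈ Finset.Icc 1 M,
        ((∏ i, liouville (a i * n + A * p * b i)) *
          ((p : ℝ) * (if p ∣ n then 1 else 0) - 1)) / (n : ℝ)
      = (-1 : ℝ) ^ k * SM' - SH := by
    have step1 : ∀ n ∈ Finset.Icc 1 M,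
        ((∏ i, liouville (a i * n + A * p * b i)) *
            ((p : ℝ) * (if p ∣ n then 1 else 0) - 1)) / (n : ℝ)
          = (if p ∣ n then (∏ i, liouville (a i * n + A * p * b i)) * (p : ℝ) / n else 0)
              - (∏ i, liouville (a i * n + A * p * b i)) / (n : ℝ) := by
      intro n hn
      by_cases hd : p ∣ n <;> simp only [hd, if_true, if_false] <;> ring
    rw [Finset.sum_congr rfl step1, Finset.sum_sub_distrib]
    congr 1
    rw [sum_dvd_reindex p hp0 M
      (fun n => (∏ i, liouville (a i * n + A * p * b i)) * (p : ℝ) / n), hSM',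
      Finset.mul_sum]
    refine Finset.sum_congr rfl fun m hm => ?_
    have hm1 : 1 ≤ m := (Finset.mem_Icc.mp hm).1
    have hm0 : (0:ℝ) < (m : ℝ) := by exact_mod_cast hm1
    have hp0' : (0:ℝ) < (p : ℝ) := by exact_mod_cast hp0
    rw [hkey m hm1]
    push_cast
    field_simp
  have hkk : ((-1 : ℝ)) ^ k * (-1 : ℝ) ^ k = 1 := by
    rw [← mul_pow]; norm_num
  -- rewrite the whole expression
  have hmain : corr k a b x A - (-1 : ℝ) ^ k * corr k a b x (A * p) -
      (-1 : ℝ) ^ k *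
        logAvg (Finset.Icc 1 M) (fun n =>
          (∏ i, liouville (a i * n + A * p * b i)) *
            ((p : ℝ) * (if p ∣ n then 1 else 0) - 1)) = (SM - SM') / D := by
    simp only [corr, logAvg, ← hMdef]
    rw [hsum, ← hSM, ← hSH, ← hDdef]
    field_simp
    linear_combination (-SM') * hkk
  rw [hmain, one_mul]
  -- bound the remaining tail
  have hsplit : SM - SM' = ∑ n ∈ Finset.Ioc M' M, (∏ i, liouville (a i * n + A * b i)) / (n : ℝ) := by
    rw [hSM, hSM', show Finset.Icc 1 M = Finset.Ioc 0 M from Finset.Icc_add_one_left_eq_Ioc 0 M,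
      show Finset.Icc 1 M' = Finset.Ioc 0 M' from Finset.Icc_add_one_left_eq_Ioc 0 M',
      ← Finset.sum_Ioc_consecutive _ (Nat.zero_le M') hM'M]
    ring
  have habs : |SM - SM'| ≤ Real.log M - Real.log M' := by
    rw [hsplit]
    refine le_trans (Finset.abs_sum_le_sum_abs _ _) ?_
    refine le_trans (Finset.sum_le_sum fun n hn => ?_) (sum_inv_Ioc_le hM'1 hM'M)
    have hn0 : (0 : ℝ) ≤ (n : ℝ) := by positivity
    rw [abs_div, habs_g, abs_of_nonneg hn0]
  have hnum2 : Real.log M - Real.log M' ≤ 2 * Real.log L := by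
    have hM'pos : (0 : ℝ) < M' := by exact_mod_cast hM'1
    have hMpos : (0 : ℝ) < M := by exact_mod_cast hM1
    have h1 : Real.log ((M : ℝ) / (2 * p)) ≤ Real.log M' :=
      Real.log_le_log (by positivity) hM'real
    rw [Real.log_div (by positivity) (by positivity)] at h1
    have h2 : Real.log (2 * (p : ℝ)) ≤ Real.log (L ^ 2) := by
      apply Real.log_le_log (by positivity)
      nlinarith [hpL]
    rw [Real.log_pow] at h2
    push_cast at h2
    linarith
  have hlogL0 : (0 : ℝ) ≤ Real.log L := Real.log_nonneg (by linarith)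
  -- sqrt argument
  have hsq : Real.sqrt L * Real.sqrt L = L := Real.mul_self_sqrt hL0.le
  have hsqrt_ge : 4 * ε⁻¹ ≤ Real.sqrt L := by
    have hmono := Real.sqrt_le_sqrt hL16
    rwa [show Real.sqrt (16 * ε⁻¹ ^ 2) = 4 * ε⁻¹ from by
      rw [show (16 : ℝ) * ε⁻¹ ^ 2 = (4 * ε⁻¹) ^ 2 by ring,
        Real.sqrt_sq (by positivity)]] at hmono
  have hlogle : Real.log L ≤ 2 * Real.sqrt L := by
    have h1 : Real.log L = 2 * Real.log (Real.sqrt L) := by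
      rw [Real.log_sqrt hL0.le]; ring
    have h2 := Real.log_le_sub_one_of_pos (Real.sqrt_pos.mpr hL0)
    linarith
  have hfinal : 2 * Real.log L / L ≤ ε := by
    rw [div_le_iff₀ hL0]
    have hprod : 0 ≤ ε * (Real.sqrt L - 4 * ε⁻¹) :=
      mul_nonneg hε.le (sub_nonneg.mpr hsqrt_ge)
    have hinv : ε * ε⁻¹ = 1 := mul_inv_cancel₀ hε.ne'
    nlinarith [Real.sqrt_nonneg L]
  have hupper : |SM - SM'| ≤ 2 * Real.log L := habs.trans hnum2
  calc |(SM - SM') / D| = |SM - SM'| / D := by rw [abs_div, abs_of_pos hD0]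
    _ ≤ (2 * Real.log L) / L :=
        div_le_div₀ (by linarith) hupper hL0 hDL
    _ ≤ ε := hfinal
end

section
/- Concentration for the divisibility averages: there exist absolute constants c, C > 0 such that the following holds. Let k, m, a, a_1,…,a_k, b_1,…,b_k be natural numbers, let c_p ∈ {−1,0,+1} for each prime p ∈ (2^m, 2^{m+1}], let (b_{i,r}) be a fixed family of signs in {−1,+1} indexed by 1 ≤ i ≤ k and natural numbers r (covering all indices a_i j + a p b_i occurring below), and let (n_p)_{2^m < p ≤ 2^{m+1}} be jointly independent random variables with n_p uniformly distributed on ℤ/pℤ. Define W_p := E_{j ≤ 2^m} c_p · b_{1, a_1 j + a p b_1}⋯b_{k, a_k j + a p b_k}·(p·1_{n_p + j ≡ 0 (mod p)} − 1), where the average is over integers 1 ≤ j ≤ 2^m. Then the W_p are jointly independent, bounded in magnitude by an absolute constant, have mean zero, and for every 0 < ε ≤ 1, P(|E_{2^m < p ≤ 2^{m+1}} W_p| ≥ ε) ≤ C·exp(−c·ε²·2^m/m), where the average is the unweighted average over primes p ∈ (2^m, 2^{m+1}]. -/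
open MeasureTheory

/-- The set of primes in the interval `(2^m, 2^(m+1)]`. -/
noncomputable def primesIn (m : ℕ) : Finset ℕ :=
  (Finset.Ioc (2 ^ m) (2 ^ (m + 1))).filter Nat.Prime

/-- The random variable
`W_p := E_{j ≤ 2^m} c_p b_{1, a_1 j + a p b_1} ⋯ b_{k, a_k j + a p b_k} (p 1_{n_p + j ≡ 0 (p)} - 1)`,
as a function of the value `npv` of `n_p`. -/
noncomputable def Wp (k : ℕ) (a b : Fin k → ℕ) (A m : ℕ) (cp : ℕ → ℝ)
    (bs : Fin k → ℕ → ℝ) (p : ℕ) (npv : ℕ) : ℝ :=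
  ((2 ^ m : ℕ) : ℝ)⁻¹ *
    ∑ j ∈ Finset.Icc 1 (2 ^ m),
      cp p * (∏ i, bs i (a i * j + A * p * b i)) *
        ((p : ℝ) * (if (npv + j) % p = 0 then 1 else 0) - 1)

lemma hit_filter_eq (p j : ℕ) (hp : 0 < p) :
    (Finset.range p).filter (fun t => (t + j) % p = 0) = {(p - j % p) % p} := by
  have hr : j % p < p := Nat.mod_lt _ hp
  have h1 : (p - j % p) % p = if j % p = 0 then 0 else p - j % p := by
    rcases eq_or_ne (j % p) 0 with h | h
    · simp [h]
    · rw [if_neg h, Nat.mod_eq_of_lt (by omega)]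
  ext t
  simp only [Finset.mem_filter, Finset.mem_range, Finset.mem_singleton]
  constructor
  · rintro ⟨ht, hmod⟩
    rw [← Nat.add_mod_mod] at hmod
    obtain ⟨c, hc⟩ := Nat.dvd_of_mod_eq_zero hmod
    have hc2 : c < 2 := by
      have h2 : p * c < p * 2 := by omega
      exact lt_of_mul_lt_mul_left h2 (Nat.zero_le p)
    interval_cases c <;> simp only [Nat.mul_zero, Nat.mul_one] at hc <;>
      rw [h1] <;> split_ifs with h <;> omega
  · rintro rfl
    refine ⟨Nat.mod_lt _ hp, ?_⟩
    rw [← Nat.add_mod_mod, h1]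
    split_ifs with h
    · simp [h]
    · rw [Nat.sub_add_cancel hr.le, Nat.mod_self]

lemma hit_card_one (p j : ℕ) (hp : 0 < p) :
    ((Finset.range p).filter (fun t => (t + j) % p = 0)).card = 1 := by
  rw [hit_filter_eq p j hp]; simp


/-- Erdős-style upper bound on the central binomial coefficient in terms of the number of
primes in `(n, 2n]`. -/
lemma centralBinom_le_quant (n : ℕ) (hn : 2 < n) :
    Nat.centralBinom n ≤ (2*n) ^ (Nat.sqrt (2*n)) * 4 ^ (2*n/3) *
      (2*n) ^ (((Finset.Ioc n (2*n)).filter Nat.Prime).card) := by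
  have n_pos : 0 < n := by omega
  have n2_pos : 1 ≤ 2 * n := by omega
  set ν := (Nat.centralBinom n).factorization with hν
  set f : ℕ → ℕ := fun x => x ^ ν x with hf
  set s := Nat.sqrt (2*n) with hs
  have h0 : Nat.centralBinom n = ∏ x ∈ (Finset.range (2*n+1)).filter Nat.Prime, f x := by
    rw [← Nat.prod_pow_factorization_centralBinom n]
    rw [← Finset.prod_filter_mul_prod_filter_not (Finset.range (2*n+1)) Nat.Prime f]
    have : ∏ x ∈ (Finset.range (2*n+1)).filter (fun x => ¬ Nat.Prime x), f x = 1 := by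
      apply Finset.prod_eq_one
      intro x hx
      rw [Finset.mem_filter] at hx
      simp only [f, hν, Nat.factorization_eq_zero_of_not_prime _ hx.2, pow_zero]
    rw [this, mul_one]
  set R := (Finset.range (2*n+1)).filter Nat.Prime with hR
  rw [h0, ← Finset.prod_filter_mul_prod_filter_not R (· ≤ s),
    ← Finset.prod_filter_mul_prod_filter_not (R.filter (¬ · ≤ s)) (· ≤ 2*n/3),
    ← Finset.prod_filter_mul_prod_filter_not ((R.filter (¬ · ≤ s)).filter (¬ · ≤ 2*n/3)) (· ≤ n)]
  have B1 : ∏ x ∈ R.filter (· ≤ s), f x ≤ (2*n)^s := by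
    refine (Finset.prod_le_prod' fun p _ => (?_ : f p ≤ 2 * n)).trans ?_
    · exact Nat.pow_factorization_choose_le (by omega)
    have hc : (Finset.Icc 1 s).card = s := by rw [Nat.card_Icc, Nat.add_sub_cancel]
    rw [Finset.prod_const]
    refine pow_right_mono₀ n2_pos ((Finset.card_le_card fun x hx => ?_).trans hc.le)
    obtain ⟨h1, h2⟩ := Finset.mem_filter.1 hx
    exact Finset.mem_Icc.mpr ⟨(Finset.mem_filter.1 h1).2.one_lt.le, h2⟩
  have B2 : ∏ x ∈ (R.filter (¬ · ≤ s)).filter (· ≤ 2*n/3), f x ≤ 4 ^ (2*n/3) := by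
    refine le_trans ?_ (primorial_le_4_pow (2*n/3))
    refine (Finset.prod_le_prod' fun p hp => (?_ : f p ≤ p)).trans ?_
    · obtain ⟨h1, _⟩ := Finset.mem_filter.1 hp
      obtain ⟨h2, h3⟩ := Finset.mem_filter.1 h1
      refine (pow_right_mono₀ (Finset.mem_filter.1 h2).2.one_lt.le ?_).trans (pow_one p).le
      exact Nat.factorization_choose_le_one (Nat.sqrt_lt'.mp <| not_le.1 h3)
    · unfold primorial
      refine Finset.prod_le_prod_of_subset_of_one_le' ?_ ?_
      · intro p hp
        obtain ⟨h1, h4⟩ := Finset.mem_filter.1 hp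
        obtain ⟨h2, _⟩ := Finset.mem_filter.1 h1
        exact Finset.mem_filter.mpr ⟨Finset.mem_range.mpr (by omega),
          (Finset.mem_filter.1 h2).2⟩
      · exact fun p hp _ => (Finset.mem_filter.1 hp).2.one_lt.le
  have B3 : ∏ x ∈ ((R.filter (¬ · ≤ s)).filter (¬ · ≤ 2*n/3)).filter (· ≤ n), f x = 1 := by
    apply Finset.prod_eq_one
    intro p hp
    obtain ⟨h1, h2⟩ := Finset.mem_filter.1 hp
    obtain ⟨h3, h4⟩ := Finset.mem_filter.1 h1
    obtain ⟨h5, _⟩ := Finset.mem_filter.1 h3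
    have hprime := (Finset.mem_filter.1 h5).2
    have hbig : 2 * n < 3 * p := by
      have := Nat.div_lt_iff_lt_mul (k := 3) (by norm_num) |>.mp (not_le.1 h4)
      omega
    simp only [f, hν,
      Nat.factorization_centralBinom_of_two_mul_self_lt_three_mul hn h2 hbig, pow_zero]
  have B4 : ∏ x ∈ ((R.filter (¬ · ≤ s)).filter (¬ · ≤ 2*n/3)).filter (¬ · ≤ n), f x ≤
      (2*n) ^ (((Finset.Ioc n (2*n)).filter Nat.Prime).card) := by
    have hsub : ((R.filter (¬ · ≤ s)).filter (¬ · ≤ 2*n/3)).filter (¬ · ≤ n) ⊆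
        (Finset.Ioc n (2*n)).filter Nat.Prime := by
      intro p hp
      obtain ⟨h1, h2⟩ := Finset.mem_filter.1 hp
      obtain ⟨h3, _⟩ := Finset.mem_filter.1 h1
      obtain ⟨h5, _⟩ := Finset.mem_filter.1 h3
      obtain ⟨h6, h7⟩ := Finset.mem_filter.1 h5
      exact Finset.mem_filter.mpr ⟨Finset.mem_Ioc.mpr ⟨not_le.1 h2, by
        have := Finset.mem_range.1 h6; omega⟩, h7⟩
    calc ∏ x ∈ _, f x ≤ (2*n) ^ (((R.filter (¬ · ≤ s)).filter (¬ · ≤ 2*n/3)).filter (¬ · ≤ n)).card := by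
          apply Finset.prod_le_pow_card
          intro p hp
          obtain ⟨h1, _⟩ := Finset.mem_filter.1 hp
          obtain ⟨h3, h4⟩ := Finset.mem_filter.1 h1
          obtain ⟨h5, h6⟩ := Finset.mem_filter.1 h3
          have hub : p ≤ 2 * n := by have := Finset.mem_range.1 (Finset.mem_filter.1 h5).1; omega
          have hν1 : ν p ≤ 1 := Nat.factorization_choose_le_one (Nat.sqrt_lt'.mp <| not_le.1 h6)
          calc f p ≤ p ^ 1 := pow_right_mono₀ (Finset.mem_filter.1 h5).2.one_lt.le hν1
            _ = p := pow_one p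
            _ ≤ 2 * n := hub
      _ ≤ (2*n) ^ (((Finset.Ioc n (2*n)).filter Nat.Prime).card) :=
          Nat.pow_le_pow_right (by omega) (Finset.card_le_card hsub)
  calc (∏ x ∈ R.filter (· ≤ s), f x) *
        ((∏ x ∈ (R.filter (¬ · ≤ s)).filter (· ≤ 2*n/3), f x) *
          ((∏ x ∈ ((R.filter (¬ · ≤ s)).filter (¬ · ≤ 2*n/3)).filter (· ≤ n), f x) *
            (∏ x ∈ ((R.filter (¬ · ≤ s)).filter (¬ · ≤ 2*n/3)).filter (¬ · ≤ n), f x)))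
      ≤ (2*n)^s * (4 ^ (2*n/3) * (1 * ((2*n) ^ (((Finset.Ioc n (2*n)).filter Nat.Prime).card)))) := by
        exact Nat.mul_le_mul B1 (Nat.mul_le_mul B2 (Nat.mul_le_mul B3.le B4))
    _ = (2*n) ^ s * 4 ^ (2*n/3) * (2*n) ^ (((Finset.Ioc n (2*n)).filter Nat.Prime).card) := by ring

lemma Lstep (m : ℕ) (hm : 1 ≤ m) (h : 3*m + 3*(m+1)*2^((m+2)/2) ≤ 2^m) :
    3*(m+2) + 3*(m+2+1)*2^((m+2+2)/2) ≤ 2^(m+2) := by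
  have ht : (m+2+2)/2 = (m+2)/2 + 1 := by omega
  rw [ht, pow_succ]
  have h1 : 1 ≤ 2^((m+2)/2) := Nat.one_le_two_pow
  have h2 : 6*(m+3) ≤ 12*(m+1) := by omega
  have h3 : (6*(m+3)) * 2^((m+2)/2) ≤ (12*(m+1)) * 2^((m+2)/2) :=
    Nat.mul_le_mul_right _ h2
  have h4 : 2^(m+2) = 4 * 2^m := by ring
  rw [h4]
  nlinarith [h, h1, h3]

lemma Lbound : ∀ m, 40 ≤ m → 3*m + 3*(m+1)*2^((m+2)/2) ≤ 2^m := by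
  have key : ∀ j, (3*(40+2*j) + 3*((40+2*j)+1)*2^(((40+2*j)+2)/2) ≤ 2^(40+2*j)) ∧
      (3*(41+2*j) + 3*((41+2*j)+1)*2^(((41+2*j)+2)/2) ≤ 2^(41+2*j)) := by
    intro j
    induction j with
    | zero => constructor <;> norm_num
    | succ j ih =>
      obtain ⟨ih1, ih2⟩ := ih
      constructor
      · have h := Lstep (40+2*j) (by omega) ih1
        have e : 40 + 2*(j+1) = 40+2*j+2 := by ring
        rw [e]; exact h
      · have h := Lstep (41+2*j) (by omega) ih2
        have e : 41 + 2*(j+1) = 41+2*j+2 := by ring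
        rw [e]; exact h
  intro m hm
  rcases Nat.even_or_odd (m - 40) with ⟨j, hj⟩ | ⟨j, hj⟩
  · have : m = 40 + 2*j := by omega
    rw [this]; exact (key j).1
  · have : m = 41 + 2*j := by omega
    rw [this]; exact (key j).2

lemma sqrt_two_pow_le (m : ℕ) : Nat.sqrt (2^(m+1)) ≤ 2^((m+2)/2) := by
  have h : 2^(m+1) ≤ (2^((m+2)/2))^2 := by
    rw [← pow_mul]
    exact Nat.pow_le_pow_right (by norm_num) (by omega)
  calc Nat.sqrt (2^(m+1)) ≤ Nat.sqrt ((2^((m+2)/2))^2) := Nat.sqrt_le_sqrt h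
    _ = 2^((m+2)/2) := by rw [Nat.sqrt_eq']

lemma primesIn_eq (m : ℕ) :
    primesIn m = (Finset.Ioc (2^m) (2*2^m)).filter Nat.Prime := by
  unfold primesIn
  congr 1
  rw [pow_succ]
  ring_nf

lemma primesIn_nonempty (m : ℕ) : (primesIn m).Nonempty := by
  obtain ⟨p, hp, h1, h2⟩ := Nat.exists_prime_lt_and_le_two_mul (2^m) (by positivity)
  exact ⟨p, by
    rw [primesIn_eq]
    exact Finset.mem_filter.mpr ⟨Finset.mem_Ioc.mpr ⟨h1, h2⟩, hp⟩⟩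

lemma card_primesIn_lower (m : ℕ) (hm : 1 ≤ m) :
    (2:ℝ)^m / (2^40 * m) ≤ ((primesIn m).card : ℝ) := by
  have hmR : (1:ℝ) ≤ (m:ℝ) := by exact_mod_cast hm
  have hcard1 : 1 ≤ (primesIn m).card := by
    obtain ⟨p, hp, h1, h2⟩ := Nat.exists_prime_lt_and_le_two_mul (2^m) (by positivity)
    refine Finset.card_pos.mpr ⟨p, ?_⟩
    rw [primesIn_eq]
    exact Finset.mem_filter.mpr ⟨Finset.mem_Ioc.mpr ⟨h1, h2⟩, hp⟩
  rcases lt_or_ge m 40 with hm40 | hm40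
  · have h1 : (2:ℝ)^m / (2^40 * m) ≤ 1 := by
      rw [div_le_one (by positivity)]
      calc (2:ℝ)^m ≤ 2^40 := by
            apply pow_le_pow_right₀ (by norm_num) (by omega)
        _ ≤ 2^40 * m := by nlinarith
    calc (2:ℝ)^m / (2^40 * m) ≤ 1 := h1
      _ ≤ ((primesIn m).card : ℝ) := by exact_mod_cast hcard1
  · -- the Erdős bound
    set n := 2^m with hn
    set k := (primesIn m).card with hk
    have hkIoc : ((Finset.Ioc n (2*n)).filter Nat.Prime).card = k := by
      rw [hk, primesIn_eq]
    have hn4 : 4 ≤ n := by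
      calc 4 = 2^2 := rfl
        _ ≤ 2^m := Nat.pow_le_pow_right (by norm_num) (by omega)
    have h1 : 4^n < n * Nat.centralBinom n := Nat.four_pow_lt_mul_centralBinom n hn4
    have h2 := centralBinom_le_quant n (by omega)
    rw [hkIoc] at h2
    set s' := Nat.sqrt (2*n) with hs'
    set q := 2*n/3 with hq
    have hcomb : 4^n < n * ((2*n)^s' * 4^q * (2*n)^k) :=
      h1.trans_le (Nat.mul_le_mul_left n h2)
    have h2n : 2*n = 2^(m+1) := by rw [hn, pow_succ]; ring
    have hrhs : n * ((2*n)^s' * 4^q * (2*n)^k) = 2^(m + ((m+1)*s' + 2*q + (m+1)*k)) := by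
      rw [h2n, hn, show (4:ℕ) = 2^2 from rfl, ← pow_mul, ← pow_mul, ← pow_mul,
        ← pow_add, ← pow_add, ← pow_add]
    have hlhs : (4:ℕ)^n = 2^(2*n) := by
      rw [show (4:ℕ) = 2^2 from rfl, ← pow_mul]
    rw [hlhs, hrhs] at hcomb
    have key : 2*n < m + ((m+1)*s' + 2*q + (m+1)*k) :=
      (Nat.pow_lt_pow_iff_right (by norm_num)).mp hcomb
    have hq3 : 3*q ≤ 2*n := by rw [hq]; omega
    have hsσ : s' ≤ 2^((m+2)/2) := by rw [hs', h2n]; exact sqrt_two_pow_le m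
    have hA : (m+1)*s' ≤ (m+1)*2^((m+2)/2) := Nat.mul_le_mul_left _ hsσ
    have hL : 3*m + 3*((m+1)*2^((m+2)/2)) ≤ n := by
      have h := Lbound m hm40
      rw [mul_assoc] at h
      rw [hn]; omega
    -- conclude n < 3*(m+1)*k
    have hfin : n < 3*((m+1)*k) := by omega
    -- cast to ℝ
    have hfinR : (n:ℝ) ≤ 3*((m:ℝ)+1)*k := by
      have : (n:ℝ) < 3*(((m:ℝ)+1)*k) := by exact_mod_cast hfin
      linarith
    have hk0 : (0:ℝ) ≤ (k:ℝ) := Nat.cast_nonneg k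
    rw [div_le_iff₀ (by positivity)]
    have hnR : ((n:ℕ):ℝ) = (2:ℝ)^m := by rw [hn]; push_cast; ring
    calc (2:ℝ)^m = (n:ℝ) := hnR.symm
      _ ≤ 3*((m:ℝ)+1)*k := hfinR
      _ ≤ (k:ℝ) * (2^40 * m) := by nlinarith

section Meas
variable {Ω : Type} [MeasurableSpace Ω]

lemma integral_comp_unif (μ : Measure Ω) [IsProbabilityMeasure μ]
    (X : Ω → ℕ) (hX : Measurable X) (p : ℕ)
    (hlt : ∀ ω, X ω < p) (hunif : ∀ t, t < p → μ (X ⁻¹' {t}) = ((p : ENNReal))⁻¹)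
    (f : ℕ → ℝ) :
    ∫ ω, f (X ω) ∂μ = ∑ t ∈ Finset.range p, f t * ((p : ℝ))⁻¹ := by
  have hfun : (fun ω => f (X ω)) =
      fun ω => ∑ t ∈ Finset.range p, Set.indicator (X ⁻¹' {t}) (fun _ => f t) ω := by
    funext ω
    symm
    calc ∑ t ∈ Finset.range p, Set.indicator (X ⁻¹' {t}) (fun _ => f t) ω
        = ∑ t ∈ Finset.range p, if X ω = t then f t else 0 := by
          refine Finset.sum_congr rfl fun t _ => ?_
          by_cases h : X ω = t
          · rw [if_pos h, Set.indicator_of_mem (by simpa using h)]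
          · rw [if_neg h, Set.indicator_of_notMem (by simpa using h)]
      _ = f (X ω) := by
          rw [Finset.sum_ite_eq (Finset.range p) (X ω) f,
            if_pos (Finset.mem_range.2 (hlt ω))]
  rw [hfun, integral_finset_sum]
  · refine Finset.sum_congr rfl fun t ht => ?_
    rw [integral_indicator_const (f t) (hX (measurableSet_singleton t)),
      measureReal_def, hunif t (Finset.mem_range.1 ht)]
    rw [ENNReal.toReal_inv]
    simp [mul_comm]
  · intro t _
    exact (integrable_const (f t)).indicator (hX (measurableSet_singleton t))

lemma integral_prod_comp (μ : Measure Ω) [IsProbabilityMeasure μ]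
    (S : Finset ℕ) (np : ℕ → Ω → ℕ) (hmeas : ∀ p, Measurable (np p))
    (hlt : ∀ p ∈ S, ∀ ω, np p ω < p)
    (hunif : ∀ p ∈ S, ∀ t : ℕ, t < p → μ (np p ⁻¹' {t}) = ((p : ENNReal))⁻¹)
    (hindep : ∀ E : ℕ → Set ℕ,
      μ (⋂ p ∈ (S : Set ℕ), np p ⁻¹' E p) = ∏ p ∈ S, μ (np p ⁻¹' E p))
    (g : ℕ → ℕ → ℝ) :
    ∫ ω, ∏ p ∈ S, g p (np p ω) ∂μ =
      ∏ p ∈ S, ∑ t ∈ Finset.range p, g p t * ((p : ℝ))⁻¹ := by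
  classical
  have hexp : (fun ω => ∏ p ∈ S, g p (np p ω)) =
      fun ω => ∑ τ ∈ S.pi (fun p => Finset.range p),
        ∏ x ∈ S.attach, (g x.1 (τ x.1 x.2) * if np x.1 ω = τ x.1 x.2 then (1:ℝ) else 0) := by
    funext ω
    rw [← Finset.prod_sum (s := S) (t := fun p => Finset.range p)
      (f := fun p t => g p t * if np p ω = t then (1:ℝ) else 0)]
    refine Finset.prod_congr rfl fun p hp => ?_
    symm
    calc ∑ t ∈ Finset.range p, g p t * (if np p ω = t then (1:ℝ) else 0)
        = ∑ t ∈ Finset.range p, (if np p ω = t then g p t else 0) := by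
          refine Finset.sum_congr rfl fun t _ => ?_
          rw [mul_ite, mul_one, mul_zero]
      _ = g p (np p ω) := by
          rw [Finset.sum_ite_eq (Finset.range p) (np p ω) (g p),
            if_pos (Finset.mem_range.2 (hlt p hp ω))]
  -- the event sets
  set E : (∀ q ∈ S, ℕ) → ℕ → Set ℕ :=
    fun τ p => if h : p ∈ S then {τ p h} else Set.univ with hE
  have hEmeas : ∀ τ p, MeasurableSet (np p ⁻¹' E τ p) :=
    fun τ p => (hmeas p) ((Set.to_countable _).measurableSet)
  have hImeas : ∀ τ, MeasurableSet (⋂ p ∈ (S : Set ℕ), np p ⁻¹' E τ p) := fun τ =>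
    MeasurableSet.biInter (Set.to_countable _) (fun p _ => hEmeas τ p)
  have hterm : ∀ τ ∈ S.pi (fun p => Finset.range p),
      (fun ω => ∏ x ∈ S.attach,
          (g x.1 (τ x.1 x.2) * if np x.1 ω = τ x.1 x.2 then (1:ℝ) else 0)) =
      Set.indicator (⋂ p ∈ (S : Set ℕ), np p ⁻¹' E τ p)
        (fun _ => ∏ x ∈ S.attach, g x.1 (τ x.1 x.2)) := by
    intro τ _
    funext ω
    by_cases hω : ω ∈ ⋂ p ∈ (S : Set ℕ), np p ⁻¹' E τ p
    · rw [Set.indicator_of_mem hω]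
      refine Finset.prod_congr rfl fun x _ => ?_
      have hx : ω ∈ np x.1 ⁻¹' E τ x.1 := by
        exact Set.mem_iInter₂.1 hω x.1 (Finset.mem_coe.2 x.2)
      rw [hE] at hx
      simp only [dif_pos x.2, Set.mem_preimage, Set.mem_singleton_iff] at hx
      rw [if_pos hx, mul_one]
    · rw [Set.indicator_of_notMem hω]
      simp only [Set.mem_iInter, not_forall] at hω
      obtain ⟨p, hpS, hp⟩ := hω
      have hpS' : p ∈ S := hpS
      refine Finset.prod_eq_zero (Finset.mem_attach S ⟨p, hpS'⟩) ?_
      rw [hE] at hp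
      simp only [dif_pos hpS', Set.mem_preimage, Set.mem_singleton_iff] at hp
      rw [if_neg hp, mul_zero]
  have hmu : ∀ τ ∈ S.pi (fun p => Finset.range p),
      (μ (⋂ p ∈ (S : Set ℕ), np p ⁻¹' E τ p)).toReal = ∏ p ∈ S, ((p : ℝ))⁻¹ := by
    intro τ hτ
    rw [hindep (E τ)]
    have : ∀ p ∈ S, μ (np p ⁻¹' E τ p) = ((p : ENNReal))⁻¹ := by
      intro p hp
      rw [hE]
      simp only [dif_pos hp]
      exact hunif p hp (τ p hp) (Finset.mem_range.1 (Finset.mem_pi.1 hτ p hp))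
    rw [Finset.prod_congr rfl this, ENNReal.toReal_prod]
    refine Finset.prod_congr rfl fun p hp => ?_
    rw [ENNReal.toReal_inv, ENNReal.toReal_natCast]
  rw [hexp, integral_finset_sum]
  · have hL : ∀ τ ∈ S.pi (fun p => Finset.range p),
        ∫ ω, ∏ x ∈ S.attach,
            (g x.1 (τ x.1 x.2) * if np x.1 ω = τ x.1 x.2 then (1:ℝ) else 0) ∂μ =
        (∏ x ∈ S.attach, g x.1 (τ x.1 x.2)) * ∏ p ∈ S, ((p : ℝ))⁻¹ := by
      intro τ hτ
      calc ∫ ω, ∏ x ∈ S.attach,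
            (g x.1 (τ x.1 x.2) * if np x.1 ω = τ x.1 x.2 then (1:ℝ) else 0) ∂μ
          = ∫ ω, Set.indicator (⋂ p ∈ (S : Set ℕ), np p ⁻¹' E τ p)
              (fun _ => ∏ x ∈ S.attach, g x.1 (τ x.1 x.2)) ω ∂μ := by rw [hterm τ hτ]
        _ = (μ (⋂ p ∈ (S : Set ℕ), np p ⁻¹' E τ p)).toReal •
              (∏ x ∈ S.attach, g x.1 (τ x.1 x.2)) := integral_indicator_const _ (hImeas τ)
        _ = (∏ x ∈ S.attach, g x.1 (τ x.1 x.2)) * ∏ p ∈ S, ((p : ℝ))⁻¹ := by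
            rw [hmu τ hτ, smul_eq_mul, mul_comm]
    rw [Finset.sum_congr rfl hL]
    rw [Finset.prod_sum]
    refine (Finset.sum_congr rfl fun τ hτ => ?_).symm
    rw [Finset.prod_mul_distrib]
    congr 1
    exact Finset.prod_attach S (fun p => ((p:ℝ))⁻¹)
  · intro τ hτ
    rw [hterm τ hτ]
    exact (integrable_const _).indicator (hImeas τ)

end Meas


/-- convexity step: `exp (θ*x) ≤ cosh (4θ) + (x/4) * sinh (4θ)` for `|x| ≤ 4`. -/
lemma exp_le_cosh_add (θ x : ℝ) (hx : |x| ≤ 4) :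
    Real.exp (θ * x) ≤ Real.cosh (4*θ) + (x/4) * Real.sinh (4*θ) := by
  have hx1 : -4 ≤ x := (abs_le.1 hx).1
  have hx2 : x ≤ 4 := (abs_le.1 hx).2
  have hu : (0:ℝ) ≤ (4+x)/8 := by linarith
  have hv : (0:ℝ) ≤ (4-x)/8 := by linarith
  have huv : (4+x)/8 + (4-x)/8 = 1 := by ring
  have hconv := convexOn_exp.2 (Set.mem_univ (4*θ)) (Set.mem_univ (-(4*θ))) hu hv huv
  have harg : ((4+x)/8) • (4*θ) + ((4-x)/8) • (-(4*θ)) = θ * x := by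
    simp only [smul_eq_mul]; ring
  rw [harg] at hconv
  have heq : (4+x)/8 * Real.exp (4*θ) + (4-x)/8 * Real.exp (-(4*θ)) =
      Real.cosh (4*θ) + (x/4) * Real.sinh (4*θ) := by
    rw [Real.cosh_eq, Real.sinh_eq]; ring
  calc Real.exp (θ*x) ≤ (4+x)/8 * Real.exp (4*θ) + (4-x)/8 * Real.exp (-(4*θ)) := by
        simpa [smul_eq_mul] using hconv
    _ = _ := heq

/-- discrete Hoeffding lemma. -/
lemma avg_exp_le (p : ℕ) (hp : 0 < p) (x : ℕ → ℝ)
    (hsum : ∑ t ∈ Finset.range p, x t = 0)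
    (hb : ∀ t ∈ Finset.range p, |x t| ≤ 4) (θ : ℝ) :
    ∑ t ∈ Finset.range p, Real.exp (θ * x t) * ((p:ℝ))⁻¹ ≤ Real.exp (8 * θ^2) := by
  have hpR : (0:ℝ) < p := by exact_mod_cast hp
  have h1 : ∑ t ∈ Finset.range p, Real.exp (θ * x t) ≤ (p:ℝ) * Real.cosh (4*θ) := by
    calc ∑ t ∈ Finset.range p, Real.exp (θ * x t)
        ≤ ∑ t ∈ Finset.range p, (Real.cosh (4*θ) + (x t/4) * Real.sinh (4*θ)) :=
          Finset.sum_le_sum fun t ht => exp_le_cosh_add θ (x t) (hb t ht)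
      _ = (p:ℝ) * Real.cosh (4*θ) + (Real.sinh (4*θ)/4) * ∑ t ∈ Finset.range p, x t := by
          rw [Finset.sum_add_distrib, Finset.sum_const, Finset.card_range,
            nsmul_eq_mul, Finset.mul_sum]
          congr 1
          refine Finset.sum_congr rfl fun t _ => by ring
      _ = (p:ℝ) * Real.cosh (4*θ) := by rw [hsum]; ring
  calc ∑ t ∈ Finset.range p, Real.exp (θ * x t) * ((p:ℝ))⁻¹
      = (∑ t ∈ Finset.range p, Real.exp (θ * x t)) * ((p:ℝ))⁻¹ := by
        rw [Finset.sum_mul]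
    _ ≤ ((p:ℝ) * Real.cosh (4*θ)) * ((p:ℝ))⁻¹ :=
        mul_le_mul_of_nonneg_right h1 (by positivity)
    _ = Real.cosh (4*θ) := by field_simp
    _ ≤ Real.exp ((4*θ)^2/2) := Real.cosh_le_exp_half_sq (4*θ)
    _ = Real.exp (8 * θ^2) := by ring_nf

/-- the number of `j ∈ [1, n]` with `p ∣ v + j` is at most `n/p + 1`. -/
lemma hits_card_le (p v n : ℕ) (hp : 0 < p) :
    ((Finset.Icc 1 n).filter (fun j => (v + j) % p = 0)).card ≤ n / p + 1 := by
  have hinj : Set.InjOn (fun j => (v + j) / p)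
      ↑((Finset.Icc 1 n).filter (fun j => (v + j) % p = 0)) := by
    intro j1 h1 j2 h2 he
    simp only [Finset.coe_filter, Set.mem_setOf_eq, Finset.mem_Icc] at h1 h2
    have d1 : p * ((v + j1) / p) = v + j1 := Nat.mul_div_cancel' (Nat.dvd_of_mod_eq_zero h1.2)
    have d2 : p * ((v + j2) / p) = v + j2 := Nat.mul_div_cancel' (Nat.dvd_of_mod_eq_zero h2.2)
    simp only at he
    rw [he] at d1
    omega
  have hmap : ∀ j ∈ (Finset.Icc 1 n).filter (fun j => (v + j) % p = 0),
      (fun j => (v + j) / p) j ∈ Finset.Ioc (v / p) ((v + n) / p) := by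
    intro j hj
    simp only [Finset.mem_filter, Finset.mem_Icc] at hj
    obtain ⟨⟨hj1, hj2⟩, hj3⟩ := hj
    have hd : p * ((v + j) / p) = v + j := Nat.mul_div_cancel' (Nat.dvd_of_mod_eq_zero hj3)
    refine Finset.mem_Ioc.mpr ⟨?_, Nat.div_le_div_right (by omega)⟩
    have h5 : p * (v / p) ≤ v := Nat.mul_div_le v p
    have h6 : p * (v / p) < p * ((v + j) / p) := by omega
    exact lt_of_mul_lt_mul_left h6 (Nat.zero_le p)
  calc ((Finset.Icc 1 n).filter (fun j => (v + j) % p = 0)).card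
      ≤ (Finset.Ioc (v / p) ((v + n) / p)).card :=
        Finset.card_le_card_of_injOn _ hmap hinj
    _ = (v + n) / p - v / p := by rw [Nat.card_Ioc]
    _ ≤ n / p + 1 := by
        have had := Nat.add_div (a := v) (b := n) hp
        split_ifs at had <;>
        · generalize h1 : (v + n) / p = cv at had ⊢
          generalize h2 : v / p = av at had ⊢
          generalize h3 : n / p = bn at had ⊢
          omega

lemma abs_Wp_le (k : ℕ) (a b : Fin k → ℕ) (A m : ℕ) (cp : ℕ → ℝ)
    (bs : Fin k → ℕ → ℝ) (hcp : ∀ p, cp p = -1 ∨ cp p = 0 ∨ cp p = 1)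
    (hbs : ∀ i r, bs i r = -1 ∨ bs i r = 1)
    (p : ℕ) (hp1 : 2^m < p) (hp2 : p ≤ 2^(m+1)) (v : ℕ) :
    |Wp k a b A m cp bs p v| ≤ 4 := by
  have hp : 0 < p := by
    have h0 : 0 < 2^m := Nat.pow_pos (by norm_num)
    omega
  set n := 2^m with hn
  have hterm : ∀ j, |cp p * (∏ i, bs i (a i * j + A * p * b i)) *
      ((p : ℝ) * (if (v + j) % p = 0 then (1:ℝ) else 0) - 1)| ≤
      (if (v + j) % p = 0 then (p:ℝ) - 1 else 1) := by
    intro j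
    have h1 : |cp p| ≤ 1 := by rcases hcp p with h | h | h <;> rw [h] <;> norm_num
    have h2 : |∏ i, bs i (a i * j + A * p * b i)| = 1 := by
      rw [Finset.abs_prod]
      rw [Finset.prod_congr rfl (fun i _ => ?_), Finset.prod_const_one]
      rcases hbs i (a i * j + A * p * b i) with h | h <;> rw [h] <;> norm_num
    have hpR : (1:ℝ) ≤ p := by exact_mod_cast hp
    have h3 : |(p : ℝ) * (if (v + j) % p = 0 then (1:ℝ) else 0) - 1| =
        (if (v + j) % p = 0 then (p:ℝ) - 1 else 1) := by
      split_ifs with h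
      · rw [mul_one, abs_of_nonneg (by linarith)]
      · rw [mul_zero, zero_sub, abs_neg, abs_one]
    calc |cp p * (∏ i, bs i (a i * j + A * p * b i)) *
        ((p : ℝ) * (if (v + j) % p = 0 then (1:ℝ) else 0) - 1)|
        = |cp p| * |∏ i, bs i (a i * j + A * p * b i)| *
          |(p : ℝ) * (if (v + j) % p = 0 then (1:ℝ) else 0) - 1| := by
          rw [abs_mul, abs_mul]
      _ ≤ 1 * 1 * (if (v + j) % p = 0 then (p:ℝ) - 1 else 1) := by
          rw [h2, h3]
          apply mul_le_mul_of_nonneg_right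
          · simpa using h1
          · split_ifs with h
            · linarith
            · norm_num
      _ = (if (v + j) % p = 0 then (p:ℝ) - 1 else 1) := by rw [one_mul, one_mul]
  have hsum : ∑ j ∈ Finset.Icc 1 n, (if (v + j) % p = 0 then (p:ℝ) - 1 else 1) ≤ 4 * n := by
    rw [Finset.sum_ite]
    have hcard := hits_card_le p v n hp
    set H := (Finset.Icc 1 n).filter (fun j => (v + j) % p = 0) with hH
    have hHp : (H.card : ℝ) * p ≤ 3 * n := by
      have h1 : H.card * p ≤ (n/p + 1) * p := Nat.mul_le_mul_right p hcard
      rw [Nat.add_mul, one_mul] at h1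
      have h2 : (n/p) * p ≤ n := Nat.div_mul_le_self n p
      have h5 : (2:ℕ)^(m+1) = 2 * n := by rw [hn, pow_succ]; ring
      have h6 : H.card * p ≤ 3 * n := by omega
      exact_mod_cast h6
    have hcard2R : (((Finset.Icc 1 n).filter (fun j => ¬ (v + j) % p = 0)).card : ℝ) ≤ n := by
      have hcard2 : ((Finset.Icc 1 n).filter (fun j => ¬ (v + j) % p = 0)).card ≤ n := by
        calc _ ≤ (Finset.Icc 1 n).card := Finset.card_le_card (Finset.filter_subset _ _)
          _ = n := by rw [Nat.card_Icc]; omega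
      exact_mod_cast hcard2
    rw [Finset.sum_const, Finset.sum_const, nsmul_eq_mul, nsmul_eq_mul]
    have hH0 : (0:ℝ) ≤ (H.card : ℝ) := Nat.cast_nonneg _
    nlinarith
  rw [Wp, abs_mul, abs_of_nonneg (by positivity : (0:ℝ) ≤ ((2^m : ℕ) : ℝ)⁻¹)]
  have habs : |∑ j ∈ Finset.Icc 1 n, cp p * (∏ i, bs i (a i * j + A * p * b i)) *
      ((p : ℝ) * (if (v + j) % p = 0 then (1:ℝ) else 0) - 1)| ≤ 4 * n := by
    calc |∑ j ∈ Finset.Icc 1 n, cp p * (∏ i, bs i (a i * j + A * p * b i)) *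
        ((p : ℝ) * (if (v + j) % p = 0 then (1:ℝ) else 0) - 1)|
        ≤ ∑ j ∈ Finset.Icc 1 n, |cp p * (∏ i, bs i (a i * j + A * p * b i)) *
          ((p : ℝ) * (if (v + j) % p = 0 then (1:ℝ) else 0) - 1)| :=
          Finset.abs_sum_le_sum_abs _ _
      _ ≤ ∑ j ∈ Finset.Icc 1 n, (if (v + j) % p = 0 then (p:ℝ) - 1 else 1) :=
          Finset.sum_le_sum fun j _ => hterm j
      _ ≤ 4 * n := hsum
  have hnR : (0:ℝ) < ((n:ℕ):ℝ) := by
    have : 0 < n := Nat.pow_pos (by norm_num)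
    exact_mod_cast this
  calc ((2^m : ℕ) : ℝ)⁻¹ * |∑ j ∈ Finset.Icc 1 n, cp p * (∏ i, bs i (a i * j + A * p * b i)) *
      ((p : ℝ) * (if (v + j) % p = 0 then (1:ℝ) else 0) - 1)|
      ≤ ((n : ℕ) : ℝ)⁻¹ * (4 * n) := mul_le_mul_of_nonneg_left habs (by positivity)
    _ = 4 := by field_simp

lemma sum_Wp_zero (k : ℕ) (a b : Fin k → ℕ) (A m : ℕ) (cp : ℕ → ℝ) (bs : Fin k → ℕ → ℝ)
    (p : ℕ) (hp : 0 < p) :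
    ∑ t ∈ Finset.range p, Wp k a b A m cp bs p t = 0 := by
  have inner : ∀ j, ∑ t ∈ Finset.range p,
      ((p:ℝ) * (if (t + j) % p = 0 then (1:ℝ) else 0) - 1) = 0 := by
    intro j
    rw [Finset.sum_sub_distrib, ← Finset.mul_sum, Finset.sum_boole, Finset.sum_const,
      Finset.card_range, nsmul_eq_mul, mul_one, hit_filter_eq p j hp]
    simp
  simp only [Wp]
  rw [← Finset.mul_sum, Finset.sum_comm]
  have hj : ∀ j ∈ Finset.Icc 1 (2^m), ∑ t ∈ Finset.range p,
      cp p * (∏ i, bs i (a i * j + A * p * b i)) *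
        ((p : ℝ) * (if (t + j) % p = 0 then (1:ℝ) else 0) - 1) = 0 := by
    intro j _
    rw [← Finset.mul_sum, inner j, mul_zero]
  rw [Finset.sum_congr rfl hj, Finset.sum_const_zero, mul_zero]

/-- **Concentration for the divisibility averages.** There are absolute constants
`c, C > 0` such that: for natural numbers `k, m, a, a₁,…,a_k, b₁,…,b_k`, signs
`c_p ∈ {-1,0,1}`, a family of signs `b_{i,r} ∈ {-1,1}`, and jointly independent random
variables `(n_p)_{2^m < p ≤ 2^(m+1), p prime}` with `n_p` uniform on `ℤ/pℤ`, the random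
variables `W_p` are jointly independent, bounded in magnitude by an absolute constant,
have mean zero, and satisfy
`P(|E_{2^m < p ≤ 2^(m+1)} W_p| ≥ ε) ≤ C exp(-c ε² 2^m / m)` for all `0 < ε ≤ 1`. -/
theorem concentration_divisibility_averages :
    ∃ c C : ℝ, 0 < c ∧ 0 < C ∧
      ∀ (k m A : ℕ), 1 ≤ k → 1 ≤ m → 1 ≤ A →
      ∀ (a b : Fin k → ℕ), (∀ i, 1 ≤ a i) → (∀ i, 1 ≤ b i) →
      ∀ cp : ℕ → ℝ, (∀ p, cp p = -1 ∨ cp p = 0 ∨ cp p = 1) →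
      ∀ bs : Fin k → ℕ → ℝ, (∀ i r, bs i r = -1 ∨ bs i r = 1) →
      ∀ (Ω : Type) (_ : MeasurableSpace Ω) (μ : Measure Ω),
        IsProbabilityMeasure μ →
      ∀ np : ℕ → Ω → ℕ,
        (∀ p, Measurable (np p)) →
        -- each `n_p` takes values in `ℤ/pℤ` and is uniformly distributed there
        (∀ p ∈ primesIn m, ∀ ω, np p ω < p) →
        (∀ p ∈ primesIn m, ∀ t : ℕ, t < p → μ (np p ⁻¹' {t}) = ((p : ENNReal))⁻¹) →
        -- the `n_p` are jointly independent
        (∀ E : ℕ → Set ℕ,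
          μ (⋂ p ∈ (primesIn m : Set ℕ), np p ⁻¹' E p) =
            ∏ p ∈ primesIn m, μ (np p ⁻¹' E p)) →
        -- the `W_p` are jointly independent
        ((∀ E : ℕ → Set ℝ,
          μ (⋂ p ∈ (primesIn m : Set ℕ),
              (fun ω => Wp k a b A m cp bs p (np p ω)) ⁻¹' E p) =
            ∏ p ∈ primesIn m,
              μ ((fun ω => Wp k a b A m cp bs p (np p ω)) ⁻¹' E p)) ∧
        -- the `W_p` are bounded in magnitude by an absolute constant
        (∀ p ∈ primesIn m, ∀ ω, |Wp k a b A m cp bs p (np p ω)| ≤ C) ∧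
        -- the `W_p` have mean zero
        (∀ p ∈ primesIn m, ∫ ω, Wp k a b A m cp bs p (np p ω) ∂μ = 0) ∧
        -- concentration of the average of the `W_p`
        (∀ ε : ℝ, 0 < ε → ε ≤ 1 →
          μ {ω | ε ≤ |((primesIn m).card : ℝ)⁻¹ *
              ∑ p ∈ primesIn m, Wp k a b A m cp bs p (np p ω)|} ≤
            ENNReal.ofReal (C * Real.exp (-c * ε ^ 2 * 2 ^ m / m)))) := by
  refine ⟨((2:ℝ)^45)⁻¹, 4, by positivity, by norm_num, ?_⟩
  intro k m A hk hm hA a b ha hb cp hcp bs hbs Ω mΩ μ hμ np hnp hlt hunif hindep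
  set S := primesIn m with hS
  have hSmem : ∀ p ∈ S, 2^m < p ∧ p ≤ 2^(m+1) := by
    intro p hpS
    have := (Finset.mem_filter.1 hpS).1
    exact Finset.mem_Ioc.1 this
  have hppos : ∀ p ∈ S, 0 < p := fun p hpS => ((Finset.mem_filter.1 hpS).2).pos
  have habsW : ∀ p ∈ S, ∀ v, |Wp k a b A m cp bs p v| ≤ 4 := by
    intro p hpS v
    obtain ⟨h1, h2⟩ := hSmem p hpS
    exact abs_Wp_le k a b A m cp bs hcp hbs p h1 h2 v
  have hsum0 : ∀ p ∈ S, ∑ t ∈ Finset.range p, Wp k a b A m cp bs p t = 0 :=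
    fun p hpS => sum_Wp_zero k a b A m cp bs p (hppos p hpS)
  refine ⟨?_, ?_, ?_, ?_⟩
  · -- joint independence
    intro E
    have := hindep (fun p => Wp k a b A m cp bs p ⁻¹' E p)
    simpa only [Set.preimage_preimage] using this
  · -- boundedness
    intro p hpS ω
    exact habsW p hpS (np p ω)
  · -- mean zero
    intro p hpS
    rw [integral_comp_unif μ (np p) (hnp p) p (hlt p hpS) (hunif p hpS)
      (Wp k a b A m cp bs p)]
    rw [← Finset.sum_mul, hsum0 p hpS, zero_mul]
  · -- concentration
    intro ε hε0 hε1
    set Nn := S.card with hNn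
    have hN1 : 1 ≤ Nn := by
      rw [hNn]
      exact (primesIn_nonempty m).card_pos
    have hNpos : (0:ℝ) < (Nn:ℝ) := by exact_mod_cast hN1
    set X : Ω → ℝ := fun ω => ∑ p ∈ S, Wp k a b A m cp bs p (np p ω) with hX
    have hXmeas : Measurable X := by
      refine Finset.measurable_sum S (fun p _ => ?_)
      have hcomp : Measurable ((Wp k a b A m cp bs p) ∘ (np p)) :=
        Measurable.comp (measurable_from_top (f := Wp k a b A m cp bs p)) (hnp p)
      exact hcomp
    set θ : ℝ := ε / 16 with hθ
    have hθ0 : 0 ≤ θ := by positivity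
    -- mgf bound
    have mgf_bound : ∀ s : ℝ, |s| = 1 →
        ∫ ω, Real.exp (θ * (s * X ω)) ∂μ ≤ Real.exp (8*θ^2*Nn) := by
      intro s hs
      have hrw : (fun ω => Real.exp (θ * (s * X ω))) =
          fun ω => ∏ p ∈ S, Real.exp (θ * (s * Wp k a b A m cp bs p (np p ω))) := by
        funext ω
        simp only [hX]
        rw [Finset.mul_sum, Finset.mul_sum, Real.exp_sum]
      rw [hrw, integral_prod_comp μ S np hnp hlt hunif hindep
        (fun p t => Real.exp (θ * (s * Wp k a b A m cp bs p t)))]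
      calc ∏ p ∈ S, ∑ t ∈ Finset.range p,
            Real.exp (θ * (s * Wp k a b A m cp bs p t)) * ((p:ℝ))⁻¹
          ≤ ∏ p ∈ S, Real.exp (8*θ^2) := by
            refine Finset.prod_le_prod (fun p _ => ?_) (fun p hpS => ?_)
            · exact Finset.sum_nonneg fun t _ => by positivity
            · refine avg_exp_le p (hppos p hpS)
                (fun t => s * Wp k a b A m cp bs p t) ?_ ?_ θ
              · rw [← Finset.mul_sum, hsum0 p hpS, mul_zero]
              · intro t _
                rw [abs_mul, hs, one_mul]
                exact habsW p hpS t
        _ = Real.exp (8*θ^2*Nn) := by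
            rw [Finset.prod_const, ← Real.exp_nat_mul]
            congr 1
            ring
    -- integrability
    have hXb : ∀ ω, |X ω| ≤ 4 * Nn := by
      intro ω
      calc |X ω| ≤ ∑ p ∈ S, |Wp k a b A m cp bs p (np p ω)| :=
            Finset.abs_sum_le_sum_abs _ _
        _ ≤ ∑ p ∈ S, 4 := Finset.sum_le_sum fun p hpS => habsW p hpS _
        _ = 4 * Nn := by rw [Finset.sum_const, nsmul_eq_mul]; ring
    have hint : ∀ s : ℝ, |s| = 1 →
        Integrable (fun ω => Real.exp (θ * (s * X ω))) μ := by
      intro s hs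
      have hmeasE : Measurable (fun ω => Real.exp (θ * (s * X ω))) :=
        Real.measurable_exp.comp (measurable_const.mul (measurable_const.mul hXmeas))
      refine (integrable_const (Real.exp (|θ| * (4*Nn)))).mono'
        hmeasE.aestronglyMeasurable (ae_of_all _ fun ω => ?_)
      rw [Real.norm_eq_abs, Real.abs_exp]
      apply Real.exp_le_exp.2
      calc θ * (s * X ω) ≤ |θ * (s * X ω)| := le_abs_self _
        _ = |θ| * (|s| * |X ω|) := by rw [abs_mul, abs_mul]
        _ = |θ| * |X ω| := by rw [hs, one_mul]
        _ ≤ |θ| * (4*Nn) := mul_le_mul_of_nonneg_left (hXb ω) (abs_nonneg θ)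
    -- Chernoff, both sides
    have hone : (fun ω => Real.exp (θ * X ω)) = fun ω => Real.exp (θ * (1 * X ω)) := by
      funext ω; rw [one_mul]
    have hneg : (fun ω => Real.exp (θ * (-X ω))) =
        fun ω => Real.exp (θ * ((-1) * X ω)) := by
      funext ω; rw [neg_one_mul]
    have hint1 : Integrable (fun ω => Real.exp (θ * X ω)) μ := by
      rw [hone]; exact hint 1 abs_one
    have hint2 : Integrable (fun ω => Real.exp (θ * (-X ω))) μ := by
      rw [hneg]; exact hint (-1) (by norm_num)
    have hmgf1 : ProbabilityTheory.mgf X μ θ ≤ Real.exp (8*θ^2*Nn) := by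
      rw [ProbabilityTheory.mgf, hone]
      exact mgf_bound 1 abs_one
    have hmgf2 : ProbabilityTheory.mgf (fun ω => -X ω) μ θ ≤ Real.exp (8*θ^2*Nn) := by
      rw [ProbabilityTheory.mgf]
      calc ∫ ω, Real.exp (θ * (-X ω)) ∂μ
          = ∫ ω, Real.exp (θ * ((-1) * X ω)) ∂μ := by rw [hneg]
        _ ≤ Real.exp (8*θ^2*Nn) := mgf_bound (-1) (by norm_num)
    have hA1 := ProbabilityTheory.measure_ge_le_exp_mul_mgf
      (X := X) (μ := μ) (t := θ) ((Nn:ℝ)*ε) hθ0 hint1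
    have hA2 := ProbabilityTheory.measure_ge_le_exp_mul_mgf
      (X := fun ω => -X ω) (μ := μ) (t := θ) ((Nn:ℝ)*ε) hθ0 hint2
    have hexp0 : (0:ℝ) < Real.exp (-θ*((Nn:ℝ)*ε)) := Real.exp_pos _
    have hside1 : (μ {ω | (Nn:ℝ)*ε ≤ X ω}).toReal ≤
        Real.exp (-((Nn:ℝ)*ε^2)/32) := by
      calc (μ {ω | (Nn:ℝ)*ε ≤ X ω}).toReal
          ≤ Real.exp (-θ*((Nn:ℝ)*ε)) * ProbabilityTheory.mgf X μ θ := hA1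
        _ ≤ Real.exp (-θ*((Nn:ℝ)*ε)) * Real.exp (8*θ^2*Nn) :=
            mul_le_mul_of_nonneg_left hmgf1 hexp0.le
        _ = Real.exp (-((Nn:ℝ)*ε^2)/32) := by
            rw [← Real.exp_add]
            congr 1
            rw [hθ]
            ring
    have hside2 : (μ {ω | (Nn:ℝ)*ε ≤ -X ω}).toReal ≤
        Real.exp (-((Nn:ℝ)*ε^2)/32) := by
      calc (μ {ω | (Nn:ℝ)*ε ≤ -X ω}).toReal
          ≤ Real.exp (-θ*((Nn:ℝ)*ε)) * ProbabilityTheory.mgf (fun ω => -X ω) μ θ := hA2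
        _ ≤ Real.exp (-θ*((Nn:ℝ)*ε)) * Real.exp (8*θ^2*Nn) :=
            mul_le_mul_of_nonneg_left hmgf2 hexp0.le
        _ = Real.exp (-((Nn:ℝ)*ε^2)/32) := by
            rw [← Real.exp_add]
            congr 1
            rw [hθ]
            ring
    -- union bound
    have hsub : {ω | ε ≤ |((primesIn m).card : ℝ)⁻¹ *
        ∑ p ∈ primesIn m, Wp k a b A m cp bs p (np p ω)|} ⊆
        {ω | (Nn:ℝ)*ε ≤ X ω} ∪ {ω | (Nn:ℝ)*ε ≤ -X ω} := by
      intro ω hω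
      simp only [Set.mem_setOf_eq] at hω
      have hω' : ε ≤ |((Nn:ℝ))⁻¹ * X ω| := hω
      rw [abs_mul, abs_of_nonneg (inv_nonneg.2 hNpos.le)] at hω'
      have h1 : (Nn:ℝ)*ε ≤ |X ω| := by
        calc (Nn:ℝ)*ε ≤ (Nn:ℝ) * (((Nn:ℝ))⁻¹ * |X ω|) :=
              mul_le_mul_of_nonneg_left hω' hNpos.le
          _ = |X ω| := by field_simp
      rcases abs_cases (X ω) with ⟨he, _⟩ | ⟨he, _⟩
      · exact Or.inl (by rw [Set.mem_setOf_eq, ← he]; exact h1)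
      · exact Or.inr (by rw [Set.mem_setOf_eq, ← he]; exact h1)
    have hofr : ∀ (B : Set Ω) (r : ℝ), (μ B).toReal ≤ r → μ B ≤ ENNReal.ofReal r := by
      intro B r h
      rw [← ENNReal.ofReal_toReal (measure_ne_top μ B)]
      exact ENNReal.ofReal_le_ofReal h
    calc μ {ω | ε ≤ |((primesIn m).card : ℝ)⁻¹ *
            ∑ p ∈ primesIn m, Wp k a b A m cp bs p (np p ω)|}
        ≤ μ ({ω | (Nn:ℝ)*ε ≤ X ω} ∪ {ω | (Nn:ℝ)*ε ≤ -X ω}) := measure_mono hsub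
      _ ≤ μ {ω | (Nn:ℝ)*ε ≤ X ω} + μ {ω | (Nn:ℝ)*ε ≤ -X ω} := measure_union_le _ _
      _ ≤ ENNReal.ofReal (Real.exp (-((Nn:ℝ)*ε^2)/32)) +
            ENNReal.ofReal (Real.exp (-((Nn:ℝ)*ε^2)/32)) :=
          add_le_add (hofr _ _ hside1) (hofr _ _ hside2)
      _ = ENNReal.ofReal (2 * Real.exp (-((Nn:ℝ)*ε^2)/32)) := by
          rw [← ENNReal.ofReal_add (Real.exp_pos _).le (Real.exp_pos _).le]
          congr 1
          ring
      _ ≤ ENNReal.ofReal (4 * Real.exp (-((2:ℝ)^45)⁻¹ * ε ^ 2 * 2 ^ m / m)) := by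
          apply ENNReal.ofReal_le_ofReal
          have hcard := card_primesIn_lower m hm
          have hmR : (1:ℝ) ≤ (m:ℝ) := by exact_mod_cast hm
          have hmpos : (0:ℝ) < (m:ℝ) := by linarith
          have hexple : Real.exp (-((Nn:ℝ)*ε^2)/32) ≤
              Real.exp (-((2:ℝ)^45)⁻¹ * ε ^ 2 * 2 ^ m / m) := by
            apply Real.exp_le_exp.2
            have key : -((2:ℝ)^45)⁻¹ * ε ^ 2 * 2 ^ m / m =
                -((ε^2/32) * ((2:ℝ)^m/(2^40 * m))) := by
              field_simp
              ring
            have key2 : (ε^2/32) * ((2:ℝ)^m/(2^40 * m)) ≤ (ε^2/32) * (Nn:ℝ) :=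
              mul_le_mul_of_nonneg_left hcard (by positivity)
            rw [key]
            have : -((Nn:ℝ)*ε^2)/32 = -((ε^2/32) * (Nn:ℝ)) := by ring
            rw [this]
            linarith
          nlinarith [Real.exp_pos (-((Nn:ℝ)*ε^2)/32),
            Real.exp_pos (-((2:ℝ)^45)⁻¹ * ε ^ 2 * 2 ^ m / m)]
end
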